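/- arXiv:1502.00213 — 6 statements merged into one kernel-verified Lean document; each statement's English description precedes it below -/
import Mathlib

section
/- For all R, t ∈ (0,∞) one has the two-sided estimate (c_Ψ 2^{β₁})^{-1/(β₁−1)} · min_{k∈{1,2}} (Ψ(R)/t)^{1/(β_k−1)} ≤ Φ(R,t) ≤ c_Ψ^{1/(β₁−1)} · max_{k∈{1,2}} (Ψ(R)/t)^{1/(β_k−1)}; in particular 0 < Φ(R,t) < ∞ for all R, t ∈ (0,∞). -/
open scoped NNReal ENNReal

open Real

lemma aux_exp {β : ℝ} (hβ : 1 < β) : -(β - 1)⁻¹ * (β - 1) = -1 := by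
  have : β - 1 ≠ 0 := by linarith
  field_simp

lemma aux_split {x β : ℝ} (hx : 0 < x) : x ^ β = x ^ (β - 1) * x := by
  have h : x ^ ((β - 1) + 1) = x ^ (β - 1) * x ^ (1:ℝ) := Real.rpow_add hx _ _
  rw [sub_add_cancel, Real.rpow_one] at h
  exact h

lemma aux_upper {a β x : ℝ} (ha : 0 < a) (hβ : 1 < β) (hx : 0 < x) :
    x - a * x ^ β ≤ a ^ (-(β - 1)⁻¹) := by
  have hβ1 : (0:ℝ) < β - 1 := by linarith
  rcases le_or_gt x (a ^ (-(β - 1)⁻¹)) with h | h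
  · have h2 : 0 ≤ a * x ^ β := by positivity
    linarith
  · have hb : (0:ℝ) < a ^ (-(β - 1)⁻¹) := rpow_pos_of_pos ha _
    have heq : (a ^ (-(β - 1)⁻¹)) ^ (β - 1) = a⁻¹ := by
      rw [← Real.rpow_mul ha.le, aux_exp hβ, Real.rpow_neg_one]
    have hx1 : a⁻¹ < x ^ (β - 1) := by
      calc a⁻¹ = (a ^ (-(β - 1)⁻¹)) ^ (β - 1) := heq.symm
        _ < x ^ (β - 1) := rpow_lt_rpow hb.le h hβ1
    have h1 : 1 < a * x ^ (β - 1) := by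
      have := mul_lt_mul_of_pos_left hx1 ha
      rwa [mul_inv_cancel₀ ha.ne'] at this
    have hx2 : x < a * x ^ β := by
      rw [aux_split hx]
      nlinarith
    linarith [hb.le]

lemma aux_valB {b β : ℝ} (hb : 0 < b) (hβ : 1 < β) :
    (2*b) ^ (-(β - 1)⁻¹) - b * ((2*b) ^ (-(β - 1)⁻¹)) ^ β = (2*b) ^ (-(β - 1)⁻¹) / 2 := by
  have h2b : (0:ℝ) < 2 * b := by linarith
  set x := (2*b) ^ (-(β - 1)⁻¹) with hxdef
  have hxpos : 0 < x := rpow_pos_of_pos h2b _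
  have h1 : x ^ (β - 1) = (2*b)⁻¹ := by
    rw [hxdef, ← Real.rpow_mul h2b.le, aux_exp hβ, Real.rpow_neg_one]
  rw [aux_split hxpos, h1]
  field_simp
  ring

lemma aux_const {c β₁ β : ℝ} (hc : 1 ≤ c) (hβ₁ : 1 < β₁) (hβ : β₁ ≤ β) :
    (c * 2 ^ β₁) ^ (-(β₁ - 1)⁻¹) ≤ (2*c) ^ (-(β - 1)⁻¹) / 2 := by
  have hc0 : (0:ℝ) < c := by linarith
  have hp₁ : (0:ℝ) < β₁ - 1 := by linarith
  have hpβ : (0:ℝ) < β - 1 := by linarith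
  have hple : (β - 1)⁻¹ ≤ (β₁ - 1)⁻¹ := by
    apply inv_anti₀ hp₁; linarith
  have e1 : (c * 2 ^ β₁) ^ (-(β₁ - 1)⁻¹) = c ^ (-(β₁-1)⁻¹) * 2 ^ (β₁ * -(β₁-1)⁻¹) := by
    rw [Real.mul_rpow hc0.le (by positivity), ← Real.rpow_mul (by norm_num : (0:ℝ) ≤ 2)]
  have e2 : (2*c) ^ (-(β - 1)⁻¹) = 2 ^ (-(β-1)⁻¹) * c ^ (-(β-1)⁻¹) := by
    rw [Real.mul_rpow (by norm_num : (0:ℝ) ≤ 2) hc0.le]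
  have e3 : (2:ℝ) ^ (β₁ * -(β₁-1)⁻¹) = 2 ^ (-(β₁-1)⁻¹) / 2 := by
    rw [show β₁ * -(β₁-1)⁻¹ = -(β₁-1)⁻¹ + (-1) by field_simp; ring,
      Real.rpow_add (by norm_num : (0:ℝ) < 2), Real.rpow_neg_one]
    ring
  rw [e1, e2, e3]
  have hcle : c ^ (-(β₁-1)⁻¹) ≤ c ^ (-(β-1)⁻¹) :=
    Real.rpow_le_rpow_of_exponent_le hc (by linarith)
  have h2le : (2:ℝ) ^ (-(β₁-1)⁻¹) ≤ 2 ^ (-(β-1)⁻¹) :=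
    Real.rpow_le_rpow_of_exponent_le (by norm_num) (by linarith)
  calc c ^ (-(β₁-1)⁻¹) * (2 ^ (-(β₁-1)⁻¹) / 2)
      = c ^ (-(β₁-1)⁻¹) * 2 ^ (-(β₁-1)⁻¹) / 2 := by ring
    _ ≤ c ^ (-(β-1)⁻¹) * 2 ^ (-(β-1)⁻¹) / 2 := by
        apply div_le_div_of_nonneg_right ?_ (by norm_num)
        exact mul_le_mul hcle h2le (by positivity) (by positivity)
    _ = 2 ^ (-(β-1)⁻¹) * c ^ (-(β-1)⁻¹) / 2 := by ring


/-- Two-sided estimate for `Φ(R,t) = sup_{r>0} (R/r - t/Ψ(r))`: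
`(c_Ψ 2^{β₁})^{-1/(β₁-1)} min_k (Ψ(R)/t)^{1/(β_k-1)} ≤ Φ(R,t)
  ≤ c_Ψ^{1/(β₁-1)} max_k (Ψ(R)/t)^{1/(β_k-1)}`, and in particular `0 < Φ(R,t) < ∞`. -/
theorem dynkin_hunt_stmt2 (Ψ : ℝ≥0 ≃ₜ ℝ≥0) (cΨ β₁ β₂ : ℝ)
    (hcΨ : 0 < cΨ) (hβ₁ : 1 < β₁) (hβ₁₂ : β₁ ≤ β₂)
    (hΨ : ∀ r R : ℝ≥0, 0 < r → r ≤ R →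
      cΨ⁻¹ * ((R : ℝ) / (r : ℝ)) ^ β₁ ≤ ((Ψ R : ℝ≥0) : ℝ) / ((Ψ r : ℝ≥0) : ℝ) ∧
      ((Ψ R : ℝ≥0) : ℝ) / ((Ψ r : ℝ≥0) : ℝ) ≤ cΨ * ((R : ℝ) / (r : ℝ)) ^ β₂)
    (Φ : ℝ≥0 → ℝ≥0 → EReal)
    (hΦ : ∀ R t : ℝ≥0, Φ R t = ⨆ r : {r : ℝ≥0 // 0 < r},
      (((R : ℝ) / (r.1 : ℝ) - (t : ℝ) / ((Ψ r.1 : ℝ≥0) : ℝ) : ℝ) : EReal))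
    (R t : ℝ≥0) (hR : 0 < R) (ht : 0 < t) :
    (((cΨ * 2 ^ β₁) ^ (-(β₁ - 1)⁻¹) *
        min ((((Ψ R : ℝ≥0) : ℝ) / (t : ℝ)) ^ (β₁ - 1)⁻¹)
          ((((Ψ R : ℝ≥0) : ℝ) / (t : ℝ)) ^ (β₂ - 1)⁻¹) : ℝ) : EReal) ≤ Φ R t ∧
    Φ R t ≤ ((cΨ ^ (β₁ - 1)⁻¹ *
        max ((((Ψ R : ℝ≥0) : ℝ) / (t : ℝ)) ^ (β₁ - 1)⁻¹)
          ((((Ψ R : ℝ≥0) : ℝ) / (t : ℝ)) ^ (β₂ - 1)⁻¹) : ℝ) : EReal) ∧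
    0 < Φ R t ∧ Φ R t < ⊤ := by
  have hR0 : (0:ℝ) < (R:ℝ) := hR
  have ht0 : (0:ℝ) < (t:ℝ) := ht
  have hβ₂ : 1 < β₂ := lt_of_lt_of_le hβ₁ hβ₁₂
  have hψ : ∀ r : ℝ≥0, 0 < r → (0:ℝ) < ((Ψ r : ℝ≥0) : ℝ) := by
    intro r hr
    by_contra h
    push_neg at h
    have h0 : ((Ψ r : ℝ≥0) : ℝ) = 0 := le_antisymm h (Ψ r).coe_nonneg
    have hthis := (hΨ r r hr le_rfl).1
    rw [h0, div_zero, div_self (NNReal.coe_pos.mpr hr).ne', Real.one_rpow, mul_one] at hthis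
    exact (inv_pos.mpr hcΨ).not_ge hthis
  have hψR : (0:ℝ) < ((Ψ R : ℝ≥0) : ℝ) := hψ R hR
  set ψR := ((Ψ R : ℝ≥0) : ℝ) with hψRdef
  have hc1 : 1 ≤ cΨ := by
    have h1 := (hΨ R R hR le_rfl).1
    rw [div_self hψR.ne', div_self hR0.ne', Real.one_rpow, mul_one] at h1
    nlinarith [inv_mul_cancel₀ hcΨ.ne', mul_le_mul_of_nonneg_right h1 hcΨ.le]
  have hq : (0:ℝ) < ψR / t := div_pos hψR ht0
  have hple : (β₂ - 1)⁻¹ ≤ (β₁ - 1)⁻¹ := by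
    apply inv_anti₀ (by linarith); linarith
  set U := cΨ ^ (β₁ - 1)⁻¹ * max ((ψR/(t:ℝ)) ^ (β₁ - 1)⁻¹) ((ψR/(t:ℝ)) ^ (β₂ - 1)⁻¹) with hU
  -- pointwise upper bound
  have hupper : ∀ r : ℝ≥0, 0 < r →
      (R:ℝ)/(r:ℝ) - (t:ℝ)/((Ψ r : ℝ≥0):ℝ) ≤ U := by
    intro r hr
    have hr0 : (0:ℝ) < (r:ℝ) := hr
    have hψr : (0:ℝ) < ((Ψ r : ℝ≥0):ℝ) := hψ r hr
    have hx0 : (0:ℝ) < (R:ℝ)/(r:ℝ) := div_pos hR0 hr0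
    set x := (R:ℝ)/(r:ℝ) with hx
    set a := (t:ℝ) / (cΨ * ψR) with ha
    have ha0 : 0 < a := div_pos ht0 (by positivity)
    have hainv : ∀ p : ℝ, a ^ (-p) = cΨ ^ p * (ψR/(t:ℝ)) ^ p := by
      intro p
      rw [Real.rpow_neg ha0.le, ← Real.inv_rpow ha0.le, ha, inv_div, mul_div_assoc,
        Real.mul_rpow hcΨ.le hq.le]
    rcases le_total r R with hrR | hRr
    · have hkey := (hΨ r R hr hrR).1
      have hdiv : a * x ^ β₁ ≤ (t:ℝ)/((Ψ r :ℝ≥0):ℝ) := by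
        have heq : (t:ℝ)/((Ψ r:ℝ≥0):ℝ) = ((t:ℝ)/ψR) * (ψR/((Ψ r:ℝ≥0):ℝ)) := by
          field_simp
        rw [heq]
        calc a * x ^ β₁ = ((t:ℝ)/ψR) * (cΨ⁻¹ * x ^ β₁) := by
              rw [ha]; field_simp
          _ ≤ ((t:ℝ)/ψR) * (ψR/((Ψ r:ℝ≥0):ℝ)) :=
              mul_le_mul_of_nonneg_left hkey (by positivity)
      have hub := aux_upper ha0 hβ₁ hx0
      calc x - (t:ℝ)/((Ψ r:ℝ≥0):ℝ) ≤ a ^ (-(β₁-1)⁻¹) := by linarith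
        _ = cΨ ^ (β₁-1)⁻¹ * (ψR/(t:ℝ)) ^ (β₁-1)⁻¹ := hainv _
        _ ≤ U := mul_le_mul_of_nonneg_left (le_max_left _ _) (by positivity)
    · have hkey := (hΨ R r hR hRr).2
      have hxb : (0:ℝ) < x ^ β₂ := rpow_pos_of_pos hx0 _
      have hrpow : ((r:ℝ)/(R:ℝ)) ^ β₂ = (x ^ β₂)⁻¹ := by
        rw [show (r:ℝ)/(R:ℝ) = x⁻¹ by rw [hx, inv_div], Real.inv_rpow hx0.le]
      rw [hrpow] at hkey
      have hψrle : ((Ψ r:ℝ≥0):ℝ) ≤ cΨ * (x ^ β₂)⁻¹ * ψR := (div_le_iff₀ hψR).mp hkey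
      have hMpos : (0:ℝ) < cΨ * (x ^ β₂)⁻¹ * ψR := by positivity
      have hdiv : a * x ^ β₂ ≤ (t:ℝ)/((Ψ r :ℝ≥0):ℝ) := by
        have h1 : (t:ℝ)/(cΨ * (x ^ β₂)⁻¹ * ψR) ≤ (t:ℝ)/((Ψ r:ℝ≥0):ℝ) :=
          div_le_div_of_nonneg_left ht0.le hψr hψrle
        have h2 : (t:ℝ)/(cΨ * (x ^ β₂)⁻¹ * ψR) = a * x ^ β₂ := by
          rw [ha]; field_simp
        linarith
      have hub := aux_upper ha0 hβ₂ hx0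
      calc x - (t:ℝ)/((Ψ r:ℝ≥0):ℝ) ≤ a ^ (-(β₂-1)⁻¹) := by linarith
        _ = cΨ ^ (β₂-1)⁻¹ * (ψR/(t:ℝ)) ^ (β₂-1)⁻¹ := hainv _
        _ ≤ U := by
            apply mul_le_mul (Real.rpow_le_rpow_of_exponent_le hc1 hple)
              (le_max_right _ _) (by positivity) (by positivity)
  set C := (cΨ * 2 ^ β₁) ^ (-(β₁-1)⁻¹) with hC
  set m := min ((ψR/(t:ℝ)) ^ (β₁ - 1)⁻¹) ((ψR/(t:ℝ)) ^ (β₂ - 1)⁻¹) with hm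
  have hCpos : 0 < C := rpow_pos_of_pos (by positivity) _
  have hmpos : 0 < m := lt_min (rpow_pos_of_pos hq _) (rpow_pos_of_pos hq _)
  set b := cΨ * (t:ℝ) / ψR with hbdef
  have hb0 : 0 < b := by positivity
  have hsplit : ∀ p : ℝ, (2*b) ^ (-p) = (2*cΨ) ^ (-p) * (ψR/(t:ℝ)) ^ p := by
    intro p
    rw [show 2*b = (2*cΨ)*((t:ℝ)/ψR) by rw [hbdef]; ring,
      Real.mul_rpow (by positivity) (by positivity)]
    congr 1
    rw [Real.rpow_neg (by positivity), ← Real.inv_rpow (by positivity), inv_div]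
  have hlow : ∃ r : ℝ≥0, 0 < r ∧ C * m ≤ (R:ℝ)/(r:ℝ) - (t:ℝ)/((Ψ r:ℝ≥0):ℝ) := by
    rcases le_or_gt (2*b) 1 with hcase | hcase
    · -- r₀ ≤ R, use β₂
      set x₀ := (2*b) ^ (-(β₂-1)⁻¹) with hx₀
      have h2b : (0:ℝ) < 2*b := by linarith
      have hx₀pos : 0 < x₀ := rpow_pos_of_pos h2b _
      have hx₀1 : 1 ≤ x₀ :=
        Real.one_le_rpow_of_pos_of_le_one_of_nonpos h2b hcase
          (neg_nonpos.mpr (inv_nonneg.mpr (by linarith)))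
      have hdivpos : (0:ℝ) < (R:ℝ)/x₀ := div_pos hR0 hx₀pos
      refine ⟨Real.toNNReal ((R:ℝ)/x₀), Real.toNNReal_pos.mpr hdivpos, ?_⟩
      set r₀ := Real.toNNReal ((R:ℝ)/x₀) with hr₀def
      have hr₀coe : (r₀:ℝ) = (R:ℝ)/x₀ := Real.coe_toNNReal _ hdivpos.le
      have hr₀posn : 0 < r₀ := Real.toNNReal_pos.mpr hdivpos
      have hr₀pos : (0:ℝ) < (r₀:ℝ) := hr₀posn
      have hψr₀ : (0:ℝ) < ((Ψ r₀:ℝ≥0):ℝ) := hψ r₀ hr₀posn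
      have hr₀R : r₀ ≤ R := by
        rw [← NNReal.coe_le_coe, hr₀coe]
        exact div_le_self hR0.le hx₀1
      have hxeq : (R:ℝ)/(r₀:ℝ) = x₀ := by
        rw [hr₀coe]; field_simp
      have hkey := (hΨ r₀ R hr₀posn hr₀R).2
      rw [hxeq] at hkey
      have ht1 : (t:ℝ)/((Ψ r₀:ℝ≥0):ℝ) ≤ b * x₀ ^ β₂ := by
        have heq : (t:ℝ)/((Ψ r₀:ℝ≥0):ℝ) = ((t:ℝ)/ψR) * (ψR/((Ψ r₀:ℝ≥0):ℝ)) := by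
          field_simp
        rw [heq]
        calc ((t:ℝ)/ψR) * (ψR/((Ψ r₀:ℝ≥0):ℝ)) ≤ ((t:ℝ)/ψR) * (cΨ * x₀ ^ β₂) :=
              mul_le_mul_of_nonneg_left hkey (by positivity)
          _ = b * x₀ ^ β₂ := by rw [hbdef]; ring
      have hvb := aux_valB hb0 hβ₂
      have hconst : C * m ≤ x₀/2 := by
        calc C * m ≤ ((2*cΨ) ^ (-(β₂-1)⁻¹)/2) * ((ψR/(t:ℝ)) ^ (β₂-1)⁻¹) :=
              mul_le_mul (aux_const hc1 hβ₁ hβ₁₂) (min_le_right _ _) hmpos.le (by positivity)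
          _ = (2*b) ^ (-(β₂-1)⁻¹)/2 := by rw [hsplit]; ring
          _ = x₀/2 := rfl
      rw [hxeq]
      linarith
    · -- R ≤ r₀, use β₁
      set x₀ := (2*b) ^ (-(β₁-1)⁻¹) with hx₀
      have h2b : (0:ℝ) < 2*b := by linarith
      have hx₀pos : 0 < x₀ := rpow_pos_of_pos h2b _
      have hx₀1 : x₀ ≤ 1 :=
        Real.rpow_le_one_of_one_le_of_nonpos hcase.le
          (neg_nonpos.mpr (inv_nonneg.mpr (by linarith)))
      have hdivpos : (0:ℝ) < (R:ℝ)/x₀ := div_pos hR0 hx₀pos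
      refine ⟨Real.toNNReal ((R:ℝ)/x₀), Real.toNNReal_pos.mpr hdivpos, ?_⟩
      set r₀ := Real.toNNReal ((R:ℝ)/x₀) with hr₀def
      have hr₀coe : (r₀:ℝ) = (R:ℝ)/x₀ := Real.coe_toNNReal _ hdivpos.le
      have hr₀posn : 0 < r₀ := Real.toNNReal_pos.mpr hdivpos
      have hψr₀ : (0:ℝ) < ((Ψ r₀:ℝ≥0):ℝ) := hψ r₀ hr₀posn
      have hRr₀ : R ≤ r₀ := by
        rw [← NNReal.coe_le_coe, hr₀coe, le_div_iff₀ hx₀pos]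
        nlinarith
      have hxeq : (R:ℝ)/(r₀:ℝ) = x₀ := by
        rw [hr₀coe]; field_simp
      have hkey := (hΨ R r₀ hR hRr₀).1
      have hrpow : ((r₀:ℝ)/(R:ℝ)) ^ β₁ = (x₀ ^ β₁)⁻¹ := by
        rw [show (r₀:ℝ)/(R:ℝ) = x₀⁻¹ by rw [← hxeq, inv_div], Real.inv_rpow hx₀pos.le]
      rw [hrpow] at hkey
      have hxb : (0:ℝ) < x₀ ^ β₁ := rpow_pos_of_pos hx₀pos _
      have hMle : cΨ⁻¹ * (x₀ ^ β₁)⁻¹ * ψR ≤ ((Ψ r₀:ℝ≥0):ℝ) := (le_div_iff₀ hψR).mp hkey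
      have hMpos : (0:ℝ) < cΨ⁻¹ * (x₀ ^ β₁)⁻¹ * ψR := by positivity
      have ht1 : (t:ℝ)/((Ψ r₀:ℝ≥0):ℝ) ≤ b * x₀ ^ β₁ := by
        have h1 : (t:ℝ)/((Ψ r₀:ℝ≥0):ℝ) ≤ (t:ℝ)/(cΨ⁻¹ * (x₀ ^ β₁)⁻¹ * ψR) :=
          div_le_div_of_nonneg_left ht0.le hMpos hMle
        have h2 : (t:ℝ)/(cΨ⁻¹ * (x₀ ^ β₁)⁻¹ * ψR) = b * x₀ ^ β₁ := by
          rw [hbdef]; field_simp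
        linarith
      have hvb := aux_valB hb0 hβ₁
      have hconst : C * m ≤ x₀/2 := by
        calc C * m ≤ ((2*cΨ) ^ (-(β₁-1)⁻¹)/2) * ((ψR/(t:ℝ)) ^ (β₁-1)⁻¹) :=
              mul_le_mul (aux_const hc1 hβ₁ le_rfl) (min_le_left _ _) hmpos.le (by positivity)
          _ = (2*b) ^ (-(β₁-1)⁻¹)/2 := by rw [hsplit]; ring
          _ = x₀/2 := rfl
      rw [hxeq]
      linarith
  have hΦge : ((C * m : ℝ) : EReal) ≤ Φ R t := by
    obtain ⟨r, hr, hle⟩ := hlow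
    rw [hΦ]
    refine le_trans ?_ (le_iSup _ (⟨r, hr⟩ : {r : ℝ≥0 // 0 < r}))
    exact EReal.coe_le_coe_iff.mpr hle
  have hΦle : Φ R t ≤ ((U : ℝ) : EReal) := by
    rw [hΦ]
    apply iSup_le
    rintro ⟨r, hr⟩
    exact EReal.coe_le_coe_iff.mpr (hupper r hr)
  refine ⟨hΦge, hΦle, ?_, lt_of_le_of_lt hΦle (EReal.coe_lt_top U)⟩
  exact lt_of_lt_of_le (EReal.coe_pos.mpr (mul_pos hCpos hmpos)) hΦge
end

section
/- Let I ⊆ (0,∞) be an interval, let V, W be open subsets of M, and let F = F_t(x,y) : I × V × W → (0,∞) be a Borel measurable function satisfying conditions (UB1), (UB2) and (DB)_Ψ. Let c₁, c₂ ∈ (0,∞) and define H_t(x,y) := F_t(x,y) exp(−c₁ Φ(c₂ d(x,y), t)) for (t,x,y) ∈ I × V × W. Then both F and H are μ-upper bound functions on I × V × W, i.e., both are Borel measurable and satisfy (UB1), (UB2) and (UB3). -/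
open scoped NNReal ENNReal
open MeasureTheory Set Filter Topology

/-- `G : I × V × W → [0,∞)` is a `μ`-upper bound function on `I × V × W`:
it is Borel measurable and satisfies (UB1), (UB2), (UB3). -/
def IsMuUpperBoundFn {M : Type*} [MetricSpace M] [MeasurableSpace M]
    (μ : MeasureTheory.Measure M) (I : Set ℝ) (V W : Set M) (G : ℝ → M → M → ℝ) : Prop :=
  (Measurable fun p : (I ×ˢ (V ×ˢ W) : Set (ℝ × M × M)) =>
      G (p : ℝ × M × M).1 (p : ℝ × M × M).2.1 (p : ℝ × M × M).2.2) ∧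
  -- (UB1)
  (∀ t ∈ I, ∀ x ∈ V, ∀ y ∈ W, (∃ s ∈ I, t < s) →
      Filter.limsup (fun s => G s x y) (nhdsWithin t (I ∩ Set.Ioi t)) ≤ G t x y) ∧
  -- (UB2)
  (∀ t ∈ I, ∀ y ∈ W, UpperSemicontinuousOn (fun x => G t x y) V) ∧
  -- (UB3)
  (∃ (h : ℕ → M → ℝ) (In : ℕ → Set ℝ) (Vn : ℕ → Set M) (Wn : ℕ → Set M),
      (∀ n, Measurable (h n)) ∧ (∀ n y, 0 ≤ h n y) ∧
      (∀ n, In n ⊆ I ∧ ∃ U : Set ℝ, IsOpen U ∧ In n = U ∩ I) ∧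
      (∀ n, Vn n ⊆ V ∧ IsOpen (Vn n)) ∧
      (∀ n, Wn n ⊆ W ∧ MeasurableSet (Wn n)) ∧
      Monotone In ∧ Monotone Vn ∧ Monotone Wn ∧
      (⋃ n, In n) = I ∧ (⋃ n, Vn n) = V ∧ (⋃ n, Wn n) = W ∧
      (∀ n, ∫⁻ y in Wn n, ENNReal.ofReal (h n y) ∂μ < ⊤) ∧
      (∀ n, ∀ t ∈ In n, ∀ x ∈ Vn n, ∀ y ∈ Wn n, G t x y ≤ h n y))

section Aux

variable (Ψ : ℝ≥0 ≃ₜ ℝ≥0) {cΨ β₁ : ℝ}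

private lemma psi_pos (hcΨ : 0 < cΨ)
    (hΨ : ∀ r R : ℝ≥0, 0 < r → r ≤ R →
      cΨ⁻¹ * ((R : ℝ) / (r : ℝ)) ^ β₁ ≤ ((Ψ R : ℝ≥0) : ℝ) / ((Ψ r : ℝ≥0) : ℝ))
    {r : ℝ≥0} (hr : 0 < r) : 0 < ((Ψ r : ℝ≥0) : ℝ) := by
  have h := hΨ r r hr le_rfl
  have hrne : ((r : ℝ≥0) : ℝ) ≠ 0 := by exact_mod_cast hr.ne'
  rw [div_self hrne, Real.one_rpow, mul_one] at h
  by_contra hle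
  push_neg at hle
  have h0 : ((Ψ r : ℝ≥0) : ℝ) = 0 := le_antisymm hle (NNReal.coe_nonneg _)
  rw [h0, div_zero] at h
  exact absurd h (not_le.2 (by positivity))

private lemma psi_zero (hcΨ : 0 < cΨ)
    (hΨ : ∀ r R : ℝ≥0, 0 < r → r ≤ R →
      cΨ⁻¹ * ((R : ℝ) / (r : ℝ)) ^ β₁ ≤ ((Ψ R : ℝ≥0) : ℝ) / ((Ψ r : ℝ≥0) : ℝ)) :
    Ψ 0 = 0 := by
  obtain ⟨r, hr⟩ := Ψ.toEquiv.surjective 0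
  rcases eq_or_lt_of_le (show (0:ℝ≥0) ≤ r from zero_le) with h | h
  · simpa [← h] using hr
  · have := psi_pos Ψ hcΨ hΨ h
    rw [show Ψ r = Ψ.toEquiv r from rfl, hr] at this
    simp at this

private lemma psi_le (hcΨ : 0 < cΨ) (hβ₁ : 1 < β₁)
    (hΨ : ∀ r R : ℝ≥0, 0 < r → r ≤ R →
      cΨ⁻¹ * ((R : ℝ) / (r : ℝ)) ^ β₁ ≤ ((Ψ R : ℝ≥0) : ℝ) / ((Ψ r : ℝ≥0) : ℝ))
    {d b : ℝ≥0} (hdb : d ≤ b) (hb : 0 < b) :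
    ((Ψ d : ℝ≥0) : ℝ) ≤ cΨ * ((Ψ b : ℝ≥0) : ℝ) := by
  have hΨb := psi_pos Ψ hcΨ hΨ hb
  rcases eq_or_lt_of_le (show (0:ℝ≥0) ≤ d from zero_le) with h | hd
  · rw [← h, psi_zero Ψ hcΨ hΨ]
    push_cast
    positivity
  · have h := hΨ d b hd hdb
    have h1 : (1 : ℝ) ≤ (b : ℝ) / (d : ℝ) := by
      rw [le_div_iff₀ (by exact_mod_cast hd)]
      simpa using (by exact_mod_cast hdb : (d : ℝ) ≤ (b : ℝ))
    have h2 : (1 : ℝ) ≤ ((b : ℝ) / (d : ℝ)) ^ β₁ := by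
      calc (1 : ℝ) = 1 ^ β₁ := (Real.one_rpow _).symm
      _ ≤ ((b : ℝ) / (d : ℝ)) ^ β₁ := Real.rpow_le_rpow zero_le_one h1 (by linarith)
    have h3 : cΨ⁻¹ ≤ ((Ψ b : ℝ≥0) : ℝ) / ((Ψ d : ℝ≥0) : ℝ) := by
      calc cΨ⁻¹ = cΨ⁻¹ * 1 := (mul_one _).symm
      _ ≤ cΨ⁻¹ * ((b : ℝ) / (d : ℝ)) ^ β₁ := by
          apply mul_le_mul_of_nonneg_left h2 (by positivity)
      _ ≤ _ := h
    have hΨd := psi_pos Ψ hcΨ hΨ hd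
    rw [le_div_iff₀ hΨd] at h3
    have hc : cΨ * cΨ⁻¹ = 1 := mul_inv_cancel₀ hcΨ.ne'
    nlinarith [h3, hΨd, hcΨ]

private lemma bdd_above_fam (hcΨ : 0 < cΨ) (hβ₁ : 1 < β₁)
    (hΨ : ∀ r R : ℝ≥0, 0 < r → r ≤ R →
      cΨ⁻¹ * ((R : ℝ) / (r : ℝ)) ^ β₁ ≤ ((Ψ R : ℝ≥0) : ℝ) / ((Ψ r : ℝ≥0) : ℝ))
    (R t : ℝ) (ht : 0 < t) :
    BddAbove (Set.range fun r : {r : ℝ≥0 // 0 < r} =>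
      R / (r.1 : ℝ) - t / ((Ψ r.1 : ℝ≥0) : ℝ)) := by
  have hΨ1 : 0 < ((Ψ 1 : ℝ≥0) : ℝ) := psi_pos Ψ hcΨ hΨ one_pos
  set a : ℝ := t * cΨ⁻¹ / ((Ψ 1 : ℝ≥0) : ℝ) with ha_def
  have ha : 0 < a := by positivity
  set ρ : ℝ := min 1 ((a / (|R| + 1)) ^ (1 / (β₁ - 1))) with hρ_def
  have hρ : 0 < ρ := lt_min one_pos (Real.rpow_pos_of_pos (by positivity) _)
  refine ⟨|R| / ρ, ?_⟩
  rintro x ⟨r, rfl⟩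
  have hr0 : (0 : ℝ) < (r.1 : ℝ) := by exact_mod_cast r.2
  have hΨr : 0 < ((Ψ r.1 : ℝ≥0) : ℝ) := psi_pos Ψ hcΨ hΨ r.2
  rcases le_or_gt (r.1 : ℝ) ρ with hcase | hcase
  · -- small r : term ≤ 0
    have hr1 : r.1 ≤ (1 : ℝ≥0) := by
      have : (r.1 : ℝ) ≤ 1 := hcase.trans (min_le_left _ _)
      exact_mod_cast this
    have hlow := hΨ r.1 1 r.2 hr1
    rw [NNReal.coe_one] at hlow
    have key : a * ((1 : ℝ) / (r.1 : ℝ)) ^ β₁ ≤ t / ((Ψ r.1 : ℝ≥0) : ℝ) := by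
      have h2 := mul_le_mul_of_nonneg_left hlow (le_of_lt (div_pos ht hΨ1))
      calc a * ((1 : ℝ) / (r.1 : ℝ)) ^ β₁
          = (t / ((Ψ 1 : ℝ≥0) : ℝ)) * (cΨ⁻¹ * ((1 : ℝ) / (r.1 : ℝ)) ^ β₁) := by
            rw [ha_def]; ring
      _ ≤ (t / ((Ψ 1 : ℝ≥0) : ℝ)) * (((Ψ 1 : ℝ≥0) : ℝ) / ((Ψ r.1 : ℝ≥0) : ℝ)) := h2
      _ = t / ((Ψ r.1 : ℝ≥0) : ℝ) := by field_simp
    have hβne : β₁ - 1 ≠ 0 := sub_ne_zero.2 (ne_of_gt hβ₁)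
    have hY : (0:ℝ) < (r.1 : ℝ) ^ (β₁ - 1) := Real.rpow_pos_of_pos hr0 _
    have hrρ : (r.1 : ℝ) ^ (β₁ - 1) * (|R| + 1) ≤ a := by
      have h1 : (r.1 : ℝ) ^ (β₁ - 1) ≤ a / (|R| + 1) := by
        calc (r.1 : ℝ) ^ (β₁ - 1) ≤ ρ ^ (β₁ - 1) :=
              Real.rpow_le_rpow hr0.le hcase (by linarith)
        _ ≤ ((a / (|R| + 1)) ^ (1 / (β₁ - 1))) ^ (β₁ - 1) :=
              Real.rpow_le_rpow hρ.le (min_le_right _ _) (by linarith)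
        _ = a / (|R| + 1) := by
              rw [← Real.rpow_mul (by positivity), one_div, inv_mul_cancel₀ hβne,
                Real.rpow_one]
      rwa [le_div_iff₀ (by positivity)] at h1
    have hRa : R / (r.1 : ℝ) ≤ a * ((1 : ℝ) / (r.1 : ℝ)) ^ β₁ := by
      have hsplit : ((1 : ℝ) / (r.1 : ℝ)) ^ β₁ = ((r.1 : ℝ) ^ (β₁ - 1) * (r.1 : ℝ))⁻¹ := by
        rw [one_div, Real.inv_rpow hr0.le, ← Real.rpow_add_one hr0.ne' (β₁ - 1)]
        ring_nf
      rw [hsplit, ← div_eq_mul_inv, div_le_div_iff₀ hr0 (by positivity)]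
      have : R * ((r.1 : ℝ) ^ (β₁ - 1)) ≤ a := by
        nlinarith [le_abs_self R, hY.le, hrρ]
      nlinarith [this, hr0]
    have : R / (r.1 : ℝ) - t / ((Ψ r.1 : ℝ≥0) : ℝ) ≤ 0 := by linarith
    exact this.trans (by positivity)
  · -- large r
    have h1 : R / (r.1 : ℝ) ≤ |R| / ρ :=
      div_le_div₀ (abs_nonneg R) (le_abs_self R) hρ hcase.le
    have h2 : 0 ≤ t / ((Ψ r.1 : ℝ≥0) : ℝ) := by positivity
    linarith


private noncomputable def gsup : ℝ × ℝ → ℝ :=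
  fun p => ⨆ r : {r : ℝ≥0 // 0 < r}, (p.1 / (r.1 : ℝ) - p.2 / ((Ψ r.1 : ℝ≥0) : ℝ))

private lemma g_continuousOn (hcΨ : 0 < cΨ) (hβ₁ : 1 < β₁)
    (hΨ : ∀ r R : ℝ≥0, 0 < r → r ≤ R →
      cΨ⁻¹ * ((R : ℝ) / (r : ℝ)) ^ β₁ ≤ ((Ψ R : ℝ≥0) : ℝ) / ((Ψ r : ℝ≥0) : ℝ)) :
    ContinuousOn (gsup Ψ) ((univ : Set ℝ) ×ˢ Ioi (0 : ℝ)) := by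
  unfold gsup
  haveI : Nonempty {r : ℝ≥0 // 0 < r} := ⟨⟨1, one_pos⟩⟩
  have hconv : ConvexOn ℝ ((univ : Set ℝ) ×ˢ Ioi (0 : ℝ))
      (fun p : ℝ × ℝ => ⨆ r : {r : ℝ≥0 // 0 < r},
        (p.1 / (r.1 : ℝ) - p.2 / ((Ψ r.1 : ℝ≥0) : ℝ))) := by
    refine ⟨convex_univ.prod (convex_Ioi 0), ?_⟩
    rintro p hp q hq θ σ hθ hσ hθσ
    have hpt : (0 : ℝ) < p.2 := hp.2
    have hqt : (0 : ℝ) < q.2 := hq.2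
    have hbp := bdd_above_fam Ψ hcΨ hβ₁ hΨ p.1 p.2 hpt
    have hbq := bdd_above_fam Ψ hcΨ hβ₁ hΨ q.1 q.2 hqt
    apply ciSup_le
    intro r
    have h1 := le_ciSup hbp r
    have h2 := le_ciSup hbq r
    have expand : (θ • p + σ • q).1 / (r.1 : ℝ) - (θ • p + σ • q).2 / ((Ψ r.1 : ℝ≥0) : ℝ)
        = θ * (p.1 / (r.1 : ℝ) - p.2 / ((Ψ r.1 : ℝ≥0) : ℝ))
          + σ * (q.1 / (r.1 : ℝ) - q.2 / ((Ψ r.1 : ℝ≥0) : ℝ)) := by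
      simp only [Prod.fst_add, Prod.snd_add, Prod.smul_fst, Prod.smul_snd, smul_eq_mul]
      ring
    rw [expand]
    have := add_le_add (mul_le_mul_of_nonneg_left h1 hθ) (mul_le_mul_of_nonneg_left h2 hσ)
    simpa [smul_eq_mul] using this
  exact hconv.continuousOn (isOpen_univ.prod isOpen_Ioi)

private lemma g_nonneg (hcΨ : 0 < cΨ) (hβ₁ : 1 < β₁)
    (hΨ : ∀ r R : ℝ≥0, 0 < r → r ≤ R →
      cΨ⁻¹ * ((R : ℝ) / (r : ℝ)) ^ β₁ ≤ ((Ψ R : ℝ≥0) : ℝ) / ((Ψ r : ℝ≥0) : ℝ))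
    {R : ℝ} (hR : 0 ≤ R) {t : ℝ} (ht : 0 < t) :
    0 ≤ gsup Ψ (R, t) := by
  unfold gsup
  have hbdd := bdd_above_fam Ψ hcΨ hβ₁ hΨ R t ht
  refine le_of_forall_pos_le_add ?_
  intro ε hε
  set c : ℝ≥0 := Real.toNNReal (max (t / ε) 1) with hc_def
  have hcc : (c : ℝ) = max (t / ε) 1 :=
    Real.coe_toNNReal _ (le_trans zero_le_one (le_max_right _ _))
  have hc1 : (1 : ℝ) ≤ (c : ℝ) := by rw [hcc]; exact le_max_right _ _
  set r : ℝ≥0 := Ψ.symm c with hr_def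
  have hΨr : Ψ r = c := Ψ.apply_symm_apply c
  have hr : 0 < r := by
    rcases eq_or_lt_of_le (show (0:ℝ≥0) ≤ r from zero_le) with h | h
    · exfalso
      have h0 : Ψ r = 0 := by rw [← h, psi_zero Ψ hcΨ hΨ]
      rw [h0] at hΨr
      rw [← hΨr] at hc1
      simp at hc1
      linarith
    · exact h
  have h1 : t / (c : ℝ) ≤ ε := by
    have h2 : t / ε ≤ (c : ℝ) := by rw [hcc]; exact le_max_left _ _
    have hcpos : (0 : ℝ) < (c : ℝ) := lt_of_lt_of_le one_pos hc1
    rw [div_le_iff₀ hcpos]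
    rw [div_le_iff₀ hε] at h2
    linarith [mul_comm ε (c : ℝ)]
  have hle := le_ciSup hbdd ⟨r, hr⟩
  have h3 : 0 - ε ≤ R / ((r : ℝ≥0) : ℝ) - t / ((Ψ r : ℝ≥0) : ℝ) := by
    rw [hΨr]
    have : 0 ≤ R / ((r : ℝ≥0) : ℝ) := div_nonneg hR (NNReal.coe_nonneg _)
    linarith
  linarith


set_option maxHeartbeats 1000000 in
private lemma build_ub3 {M : Type*} [MetricSpace M] [LocallyCompactSpace M]
    [TopologicalSpace.SeparableSpace M] [MeasurableSpace M] [BorelSpace M]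
    (μ : Measure M) [IsFiniteMeasureOnCompacts μ]
    (hcΨ : 0 < cΨ) (hβ₁ : 1 < β₁)
    (hΨ : ∀ r R : ℝ≥0, 0 < r → r ≤ R →
      cΨ⁻¹ * ((R : ℝ) / (r : ℝ)) ^ β₁ ≤ ((Ψ R : ℝ≥0) : ℝ) / ((Ψ r : ℝ≥0) : ℝ))
    (I : Set ℝ) (hI : I ⊆ Set.Ioi 0)
    (V W : Set M) (hV : IsOpen V) (hW : IsOpen W)
    (F : ℝ → M → M → ℝ)
    (hFpos : ∀ t ∈ I, ∀ x ∈ V, ∀ y ∈ W, 0 < F t x y)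
    (αF cF : ℝ) (hαF : 0 < αF) (hcF : 0 < cF)
    (hDB : ∀ t ∈ I, ∀ x ∈ V, ∀ y ∈ W, ∀ s ∈ I, ∀ z ∈ V, ∀ w ∈ W, s ≤ t →
      F s z w / F t x y ≤
        cF * ((max (max t ((Ψ (nndist x z) : ℝ≥0) : ℝ)) ((Ψ (nndist y w) : ℝ≥0) : ℝ)) / s) ^ αF)
    (G : ℝ → M → M → ℝ) (hGF : ∀ t ∈ I, ∀ x ∈ V, ∀ y ∈ W, G t x y ≤ F t x y) :
    (∃ (h : ℕ → M → ℝ) (In : ℕ → Set ℝ) (Vn : ℕ → Set M) (Wn : ℕ → Set M),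
      (∀ n, Measurable (h n)) ∧ (∀ n y, 0 ≤ h n y) ∧
      (∀ n, In n ⊆ I ∧ ∃ U : Set ℝ, IsOpen U ∧ In n = U ∩ I) ∧
      (∀ n, Vn n ⊆ V ∧ IsOpen (Vn n)) ∧
      (∀ n, Wn n ⊆ W ∧ MeasurableSet (Wn n)) ∧
      Monotone In ∧ Monotone Vn ∧ Monotone Wn ∧
      (⋃ n, In n) = I ∧ (⋃ n, Vn n) = V ∧ (⋃ n, Wn n) = W ∧
      (∀ n, ∫⁻ y in Wn n, ENNReal.ofReal (h n y) ∂μ < ⊤) ∧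
      (∀ n, ∀ t ∈ In n, ∀ x ∈ Vn n, ∀ y ∈ Wn n, G t x y ≤ h n y)) := by
  classical
  by_cases hne : I.Nonempty ∧ V.Nonempty ∧ W.Nonempty
  case neg =>
    refine ⟨fun _ _ => 0, fun _ => I, fun _ => V, fun _ => W,
      fun _ => measurable_const, fun _ _ => le_rfl,
      fun _ => ⟨Subset.rfl, univ, isOpen_univ, (univ_inter I).symm⟩,
      fun _ => ⟨Subset.rfl, hV⟩, fun _ => ⟨Subset.rfl, hW.measurableSet⟩,
      monotone_const, monotone_const, monotone_const,
      iUnion_const _, iUnion_const _, iUnion_const _,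
      fun _ => by simp, ?_⟩
    intro n t ht x hx y hy
    exact absurd ⟨⟨t, ht⟩, ⟨x, hx⟩, ⟨y, hy⟩⟩ hne
  case pos =>
  obtain ⟨⟨t₀, ht₀⟩, ⟨x₀, hx₀⟩, ⟨y₀, hy₀⟩⟩ := hne
  -- exhaustion of `I`
  have hcov : ∃ (T : ℕ → ℝ) (J : ℕ → Set ℝ), Monotone T ∧ (∀ n, T n ∈ I) ∧
      (∀ n, IsOpen (J n)) ∧ Monotone J ∧ (⋃ n, J n ∩ I) = I ∧
      (∀ n s, s ∈ J n ∩ I → 1 / ((n : ℝ) + 1) < s ∧ s ≤ T n) := by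
    by_cases hmax : ∃ m ∈ I, ∀ s ∈ I, s ≤ m
    · obtain ⟨m, hmI, hm⟩ := hmax
      refine ⟨fun _ => m, fun n => Ioi (1 / ((n : ℝ) + 1)), monotone_const, fun _ => hmI,
        fun _ => isOpen_Ioi, ?_, ?_, fun n s hs => ⟨hs.1, hm s hs.2⟩⟩
      · intro a b hab
        apply Ioi_subset_Ioi
        apply one_div_le_one_div_of_le (by positivity)
        have : (a : ℝ) ≤ (b : ℝ) := Nat.cast_le.2 hab
        linarith
      · apply Subset.antisymm
        · exact iUnion_subset fun n => inter_subset_right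
        · intro s hs
          obtain ⟨n, hn⟩ := exists_nat_one_div_lt (show (0:ℝ) < s from hI hs)
          exact mem_iUnion.2 ⟨n, hn, hs⟩
    · push_neg at hmax
      have hEx : ∀ n : ℕ, ∃ s : ℝ, s ∈ I ∧
          (((Denumerable.ofNat ℚ n : ℚ) : ℝ) < s ∨
            ¬ ∃ s' ∈ I, ((Denumerable.ofNat ℚ n : ℚ) : ℝ) < s') := by
        intro n
        by_cases h : ∃ s' ∈ I, ((Denumerable.ofNat ℚ n : ℚ) : ℝ) < s'
        · obtain ⟨s', hs'1, hs'2⟩ := h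
          exact ⟨s', hs'1, Or.inl hs'2⟩
        · exact ⟨t₀, ht₀, Or.inr h⟩
      choose u huI hu2 using hEx
      have hucov : ∀ s ∈ I, ∃ n, s < u n := by
        intro s hs
        obtain ⟨s', hs'I, hss'⟩ := hmax s hs
        obtain ⟨q, hq1, hq2⟩ := exists_rat_btwn hss'
        refine ⟨@Encodable.encode ℚ Denumerable.toEncodable q, ?_⟩
        have heq : (Denumerable.ofNat ℚ (@Encodable.encode ℚ Denumerable.toEncodable q)) = q := Denumerable.ofNat_encode q
        rcases hu2 (@Encodable.encode ℚ Denumerable.toEncodable q) with h | h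
        · rw [heq] at h
          exact hq1.trans h
        · exact absurd ⟨s', hs'I, by rw [heq]; exact hq2⟩ h
      have hTmono : Monotone (fun n => (Finset.range (n + 1)).sup'
          Finset.nonempty_range_add_one u) := by
        intro a b hab
        exact Finset.sup'_mono u (Finset.range_subset_range.2 (by omega)) _
      have hTI : ∀ n, (Finset.range (n + 1)).sup' Finset.nonempty_range_add_one u ∈ I := by
        intro n
        obtain ⟨i, _, hi⟩ :=
          Finset.exists_mem_eq_sup' (Finset.nonempty_range_add_one (n := n)) u
        rw [hi]
        exact huI i
      have huT : ∀ n, u n ≤ (Finset.range (n + 1)).sup' Finset.nonempty_range_add_one u :=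
        fun n => Finset.le_sup' u (Finset.self_mem_range_succ n)
      refine ⟨fun n => (Finset.range (n + 1)).sup' Finset.nonempty_range_add_one u,
        fun n => Ioo (1 / ((n : ℝ) + 1))
          ((Finset.range (n + 1)).sup' Finset.nonempty_range_add_one u),
        hTmono, hTI, fun _ => isOpen_Ioo, ?_, ?_, fun n s hs => ⟨hs.1.1, hs.1.2.le⟩⟩
      · intro a b hab
        apply Ioo_subset_Ioo _ (hTmono hab)
        apply one_div_le_one_div_of_le (by positivity)
        have : (a : ℝ) ≤ (b : ℝ) := Nat.cast_le.2 hab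
        linarith
      · apply Subset.antisymm
        · exact iUnion_subset fun n => inter_subset_right
        · intro s hs
          obtain ⟨n₁, hn₁⟩ := exists_nat_one_div_lt (show (0:ℝ) < s from hI hs)
          obtain ⟨n₂, hn₂⟩ := hucov s hs
          refine mem_iUnion.2 ⟨max n₁ n₂, ⟨?_, ?_⟩, hs⟩
          · refine lt_of_le_of_lt ?_ hn₁
            apply one_div_le_one_div_of_le (by positivity)
            have : (n₁ : ℝ) ≤ (max n₁ n₂ : ℕ) := Nat.cast_le.2 (le_max_left _ _)
            linarith
          · exact lt_of_lt_of_le hn₂ ((huT n₂).trans (hTmono (le_max_right n₁ n₂)))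
  obtain ⟨T, J, hTmono, hTI, hJopen, hJmono, hJunion, hJspec⟩ := hcov
  haveI : SecondCountableTopology M := UniformSpace.secondCountable_of_separable M
  set K : CompactExhaustion M := CompactExhaustion.choice M with hK_def
  set Vn : ℕ → Set M := fun n => V ∩ Metric.ball x₀ ((n : ℝ) + 1) with hVn_def
  set Wn : ℕ → Set M := fun n => W ∩ (K n ∩ Metric.closedBall y₀ ((n : ℝ) + 1)) with hWn_def
  set Mn : ℕ → ℝ := fun n => max (T n) (cΨ * ((Ψ ((n : ℝ≥0) + 1) : ℝ≥0) : ℝ)) with hMn_def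
  set C : ℕ → ℝ := fun n => cF * (Mn n * ((n : ℝ) + 1)) ^ αF * F (T n) x₀ y₀ with hC_def
  have hTpos : ∀ n, 0 < T n := fun n => hI (hTI n)
  have hMnpos : ∀ n, 0 < Mn n := fun n => lt_of_lt_of_le (hTpos n) (le_max_left _ _)
  have hFTpos : ∀ n, 0 < F (T n) x₀ y₀ := fun n => hFpos _ (hTI n) _ hx₀ _ hy₀
  have hCpos : ∀ n, 0 ≤ C n := by
    intro n
    have h1 : (0:ℝ) ≤ (Mn n * ((n : ℝ) + 1)) ^ αF := Real.rpow_nonneg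
      (mul_nonneg (hMnpos n).le (by positivity)) _
    exact mul_nonneg (mul_nonneg hcF.le h1) (hFTpos n).le
  refine ⟨fun n _ => C n, fun n => J n ∩ I, Vn, Wn,
    fun _ => measurable_const, fun n _ => hCpos n,
    fun n => ⟨inter_subset_right, J n, hJopen n, rfl⟩,
    fun n => ⟨inter_subset_left, hV.inter Metric.isOpen_ball⟩,
    fun n => ⟨inter_subset_left, hW.measurableSet.inter
      (((K.isCompact n).measurableSet).inter measurableSet_closedBall)⟩,
    fun a b hab => inter_subset_inter (hJmono hab) Subset.rfl,
    ?_, ?_, hJunion, ?_, ?_, ?_, ?_⟩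
  · -- Monotone Vn
    intro a b hab
    apply inter_subset_inter Subset.rfl
    apply Metric.ball_subset_ball
    have : (a : ℝ) ≤ (b : ℝ) := Nat.cast_le.2 hab
    linarith
  · -- Monotone Wn
    intro a b hab
    apply inter_subset_inter Subset.rfl
    apply inter_subset_inter (K.subset hab)
    apply Metric.closedBall_subset_closedBall
    have : (a : ℝ) ≤ (b : ℝ) := Nat.cast_le.2 hab
    linarith
  · -- ⋃ Vn = V
    apply Subset.antisymm (iUnion_subset fun n => inter_subset_left)
    intro x hx
    obtain ⟨n, hn⟩ := exists_nat_gt (dist x x₀)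
    exact mem_iUnion.2 ⟨n, hx, by simp [Metric.mem_ball]; linarith⟩
  · -- ⋃ Wn = W
    apply Subset.antisymm (iUnion_subset fun n => inter_subset_left)
    intro y hy
    obtain ⟨n₁, hn₁⟩ := K.exists_mem y
    obtain ⟨n₂, hn₂⟩ := exists_nat_gt (dist y y₀)
    refine mem_iUnion.2 ⟨max n₁ n₂, hy, K.subset (le_max_left _ _) hn₁, ?_⟩
    simp only [Metric.mem_closedBall]
    have : (n₂ : ℝ) ≤ (max n₁ n₂ : ℕ) := Nat.cast_le.2 (le_max_right _ _)
    linarith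
  · -- integral finite
    intro n
    rw [MeasureTheory.setLIntegral_const]
    apply ENNReal.mul_lt_top ENNReal.ofReal_lt_top
    refine lt_of_le_of_lt (measure_mono ?_) (K.isCompact n).measure_lt_top
    exact fun y hy => hy.2.1
  · -- the bound
    intro n s hs z hz w hw
    obtain ⟨hs1, hs2⟩ := hJspec n s hs
    have hsI : s ∈ I := hs.2
    have hspos : 0 < s := hI hsI
    have hzV : z ∈ V := hz.1
    have hwW : w ∈ W := hw.1
    have hdb := hDB (T n) (hTI n) x₀ hx₀ y₀ hy₀ s hsI z hzV w hwW hs2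
    have hn1pos : (0:ℝ≥0) < (n : ℝ≥0) + 1 := by positivity
    have hdz : nndist x₀ z ≤ (n : ℝ≥0) + 1 := by
      have h1 := hz.2
      rw [Metric.mem_ball] at h1
      rw [← NNReal.coe_le_coe, coe_nndist, dist_comm]
      push_cast
      linarith
    have hdw : nndist y₀ w ≤ (n : ℝ≥0) + 1 := by
      have h1 := hw.2.2
      rw [Metric.mem_closedBall] at h1
      rw [← NNReal.coe_le_coe, coe_nndist, dist_comm]
      push_cast
      linarith
    have hX : max (max (T n) ((Ψ (nndist x₀ z) : ℝ≥0) : ℝ)) ((Ψ (nndist y₀ w) : ℝ≥0) : ℝ)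
        ≤ Mn n := by
      apply max_le (max_le (le_max_left _ _) _) _
      · exact le_trans (psi_le Ψ hcΨ hβ₁ hΨ hdz hn1pos) (le_max_right _ _)
      · exact le_trans (psi_le Ψ hcΨ hβ₁ hΨ hdw hn1pos) (le_max_right _ _)
    have hXnn : (0:ℝ) ≤ max (max (T n) ((Ψ (nndist x₀ z) : ℝ≥0) : ℝ))
        ((Ψ (nndist y₀ w) : ℝ≥0) : ℝ) :=
      le_trans (hTpos n).le (le_trans (le_max_left _ _) (le_max_left _ _))
    have hsinv : s⁻¹ ≤ (n : ℝ) + 1 := by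
      rw [inv_le_comm₀ hspos (by positivity)]
      rw [div_lt_iff₀ (by positivity)] at hs1
      rw [inv_le_iff_one_le_mul₀ (by positivity)]
      linarith [mul_comm s ((n:ℝ)+1)]
    have hfrac : (max (max (T n) ((Ψ (nndist x₀ z) : ℝ≥0) : ℝ))
        ((Ψ (nndist y₀ w) : ℝ≥0) : ℝ)) / s ≤ Mn n * ((n : ℝ) + 1) := by
      rw [div_eq_mul_inv]
      exact mul_le_mul hX hsinv (by positivity) (hMnpos n).le
    have hrpow : ((max (max (T n) ((Ψ (nndist x₀ z) : ℝ≥0) : ℝ))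
        ((Ψ (nndist y₀ w) : ℝ≥0) : ℝ)) / s) ^ αF ≤ (Mn n * ((n : ℝ) + 1)) ^ αF :=
      Real.rpow_le_rpow (div_nonneg hXnn hspos.le) hfrac hαF.le
    have hF : F s z w ≤ C n := by
      rw [div_le_iff₀ (hFTpos n)] at hdb
      calc F s z w ≤ cF * ((max (max (T n) ((Ψ (nndist x₀ z) : ℝ≥0) : ℝ))
            ((Ψ (nndist y₀ w) : ℝ≥0) : ℝ)) / s) ^ αF * F (T n) x₀ y₀ := hdb
      _ ≤ cF * (Mn n * ((n : ℝ) + 1)) ^ αF * F (T n) x₀ y₀ := by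
          apply mul_le_mul_of_nonneg_right _ (hFTpos n).le
          exact mul_le_mul_of_nonneg_left hrpow hcF.le
      _ = C n := rfl
    exact le_trans (hGF s hsI z hzV w hwW) hF

end Aux

set_option maxHeartbeats 4000000 in
/-- If `F : I × V × W → (0,∞)` is Borel measurable and satisfies (UB1), (UB2) and (DB)_Ψ,
then both `F` and `H_t(x,y) := F_t(x,y) exp(-c₁ Φ(c₂ d(x,y), t))` are `μ`-upper bound
functions on `I × V × W`, where `Φ(R,t) = sup_{r>0} (R/r - t/Ψ(r))`. -/
theorem dynkin_hunt_stmt7 {M : Type*} [MetricSpace M] [LocallyCompactSpace M]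
    [TopologicalSpace.SeparableSpace M] [MeasurableSpace M] [BorelSpace M]
    (μ : Measure M) [IsFiniteMeasureOnCompacts μ]
    (Ψ : ℝ≥0 ≃ₜ ℝ≥0) (cΨ β₁ β₂ : ℝ)
    (hcΨ : 0 < cΨ) (hβ₁ : 1 < β₁) (hβ₁₂ : β₁ ≤ β₂)
    (hΨ : ∀ r R : ℝ≥0, 0 < r → r ≤ R →
      cΨ⁻¹ * ((R : ℝ) / (r : ℝ)) ^ β₁ ≤ ((Ψ R : ℝ≥0) : ℝ) / ((Ψ r : ℝ≥0) : ℝ) ∧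
      ((Ψ R : ℝ≥0) : ℝ) / ((Ψ r : ℝ≥0) : ℝ) ≤ cΨ * ((R : ℝ) / (r : ℝ)) ^ β₂)
    (Φ : ℝ≥0 → ℝ → ℝ)
    (hΦ : ∀ (R : ℝ≥0) (t : ℝ), Φ R t = ⨆ r : {r : ℝ≥0 // 0 < r},
      ((R : ℝ) / (r.1 : ℝ) - t / ((Ψ r.1 : ℝ≥0) : ℝ)))
    (I : Set ℝ) (hI : I ⊆ Set.Ioi 0) (hIord : I.OrdConnected)
    (V W : Set M) (hV : IsOpen V) (hW : IsOpen W)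
    (F : ℝ → M → M → ℝ)
    (hFpos : ∀ t ∈ I, ∀ x ∈ V, ∀ y ∈ W, 0 < F t x y)
    (hFmeas : Measurable fun p : (I ×ˢ (V ×ˢ W) : Set (ℝ × M × M)) =>
      F (p : ℝ × M × M).1 (p : ℝ × M × M).2.1 (p : ℝ × M × M).2.2)
    (hUB1 : ∀ t ∈ I, ∀ x ∈ V, ∀ y ∈ W, (∃ s ∈ I, t < s) →
      Filter.limsup (fun s => F s x y) (nhdsWithin t (I ∩ Set.Ioi t)) ≤ F t x y)
    (hUB2 : ∀ t ∈ I, ∀ y ∈ W, UpperSemicontinuousOn (fun x => F t x y) V)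
    (αF cF : ℝ) (hαF : 0 < αF) (hcF : 0 < cF)
    (hDB : ∀ t ∈ I, ∀ x ∈ V, ∀ y ∈ W, ∀ s ∈ I, ∀ z ∈ V, ∀ w ∈ W, s ≤ t →
      F s z w / F t x y ≤
        cF * ((max (max t ((Ψ (nndist x z) : ℝ≥0) : ℝ)) ((Ψ (nndist y w) : ℝ≥0) : ℝ)) / s) ^ αF)
    (c₁ : ℝ) (hc₁ : 0 < c₁) (c₂ : ℝ≥0) (hc₂ : 0 < c₂) :
    IsMuUpperBoundFn μ I V W F ∧
    IsMuUpperBoundFn μ I V W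
      (fun t x y => F t x y * Real.exp (-(c₁ * Φ (c₂ * nndist x y) t))) := by

  haveI : SecondCountableTopology M := UniformSpace.secondCountable_of_separable M
  have hΨ1 : ∀ r R : ℝ≥0, 0 < r → r ≤ R →
      cΨ⁻¹ * ((R : ℝ) / (r : ℝ)) ^ β₁ ≤ ((Ψ R : ℝ≥0) : ℝ) / ((Ψ r : ℝ≥0) : ℝ) :=
    fun r R hr hrR => (hΨ r R hr hrR).1
  haveI : Nonempty {r : ℝ≥0 // 0 < r} := ⟨⟨1, one_pos⟩⟩
  have hΦg : ∀ (R : ℝ≥0) (t : ℝ), Φ R t = gsup Ψ ((R : ℝ), t) := by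
    intro R t
    rw [hΦ]
    rfl
  have hgcont : ContinuousOn (gsup Ψ) ((univ : Set ℝ) ×ˢ Ioi (0 : ℝ)) :=
    g_continuousOn Ψ hcΨ hβ₁ hΨ1
  have hgnn : ∀ (R : ℝ≥0) (t : ℝ), 0 < t → 0 ≤ gsup Ψ ((R : ℝ), t) := fun R t ht =>
    g_nonneg Ψ hcΨ hβ₁ hΨ1 (NNReal.coe_nonneg R) ht
  have hΨ0 : Ψ 0 = 0 := psi_zero Ψ hcΨ hΨ1
  -- H ≤ F on the domain
  have hHF : ∀ t ∈ I, ∀ x ∈ V, ∀ y ∈ W,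
      F t x y * Real.exp (-(c₁ * Φ (c₂ * nndist x y) t)) ≤ F t x y := by
    intro t ht x hx y hy
    have h1 : 0 ≤ Φ (c₂ * nndist x y) t := by
      rw [hΦg]; exact hgnn _ _ (hI ht)
    have h2 : Real.exp (-(c₁ * Φ (c₂ * nndist x y) t)) ≤ 1 :=
      Real.exp_le_one_iff.2 (by nlinarith)
    exact mul_le_of_le_one_right (hFpos t ht x hx y hy).le h2
  -- measurability of H
  have hcontE : Continuous fun p : (I ×ˢ (V ×ˢ W) : Set (ℝ × M × M)) =>
      Real.exp (-(c₁ * gsup Ψ (((c₂ * nndist (p : ℝ × M × M).2.1 (p : ℝ × M × M).2.2 : ℝ≥0) : ℝ),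
        (p : ℝ × M × M).1))) := by
    apply Real.continuous_exp.comp
    apply Continuous.neg
    apply Continuous.mul continuous_const
    apply hgcont.comp_continuous
    · refine Continuous.prodMk ?_ ?_
      · exact NNReal.continuous_coe.comp (continuous_const.mul
          (Continuous.nndist (continuous_subtype_val.snd.fst)
            (continuous_subtype_val.snd.snd)))
      · exact continuous_subtype_val.fst
    · exact fun p => ⟨mem_univ _, hI p.2.1⟩
  have hHmeas : Measurable fun p : (I ×ˢ (V ×ˢ W) : Set (ℝ × M × M)) =>
      F (p : ℝ × M × M).1 (p : ℝ × M × M).2.1 (p : ℝ × M × M).2.2 *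
        Real.exp (-(c₁ * Φ (c₂ * nndist (p : ℝ × M × M).2.1 (p : ℝ × M × M).2.2)
          (p : ℝ × M × M).1)) := by
    simp only [hΦg]
    exact hFmeas.mul hcontE.measurable
  -- (UB1) for H
  have hUB1H : ∀ t ∈ I, ∀ x ∈ V, ∀ y ∈ W, (∃ s ∈ I, t < s) →
      Filter.limsup (fun s => F s x y * Real.exp (-(c₁ * Φ (c₂ * nndist x y) s)))
        (nhdsWithin t (I ∩ Set.Ioi t)) ≤
        F t x y * Real.exp (-(c₁ * Φ (c₂ * nndist x y) t)) := by
    intro t ht x hx y hy hex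
    obtain ⟨s₀, hs₀I, hts₀⟩ := hex
    have htpos : 0 < t := hI ht
    have hs₀pos : 0 < s₀ := hI hs₀I
    set l := nhdsWithin t (I ∩ Set.Ioi t) with hl_def
    haveI hne : l.NeBot := by
      have hIoo : Ioo t s₀ ⊆ I ∩ Set.Ioi t := fun z hz =>
        ⟨hIord.out ht hs₀I ⟨hz.1.le, hz.2.le⟩, hz.1⟩
      have h1 : (nhdsWithin t (Ioo t s₀)).NeBot := by
        rw [← mem_closure_iff_nhdsWithin_neBot, closure_Ioo (ne_of_lt hts₀)]
        exact ⟨le_rfl, hts₀.le⟩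
      exact h1.mono (nhdsWithin_mono t hIoo)
    set e : ℝ → ℝ := fun s => Real.exp (-(c₁ * gsup Ψ (((c₂ * nndist x y : ℝ≥0) : ℝ), s)))
      with he_def
    have hΦe : ∀ s : ℝ, Real.exp (-(c₁ * Φ (c₂ * nndist x y) s)) = e s := by
      intro s; rw [hΦg]
    have heCt : ContinuousAt e t := by
      have hmem : ((((c₂ * nndist x y : ℝ≥0)) : ℝ), t) ∈ (univ : Set ℝ) ×ˢ Ioi (0 : ℝ) :=
        ⟨mem_univ _, htpos⟩
      have hc : ContinuousAt (fun s : ℝ => gsup Ψ (((c₂ * nndist x y : ℝ≥0) : ℝ), s)) t :=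
        (hgcont.continuousAt ((isOpen_univ.prod isOpen_Ioi).mem_nhds hmem)).comp
          ((continuous_const.prodMk continuous_id).continuousAt)
      exact Real.continuous_exp.continuousAt.comp ((hc.const_mul c₁).neg)
    have hel : Filter.Tendsto e l (nhds (e t)) :=
      heCt.tendsto.mono_left nhdsWithin_le_nhds
    set B : ℝ := cF * (s₀ / t) ^ αF * F s₀ x y with hB_def
    have hFub : ∀ᶠ s in l, F s x y ≤ B := by
      have hlt : ∀ᶠ s in l, s < s₀ := nhdsWithin_le_nhds (Iio_mem_nhds hts₀)
      filter_upwards [self_mem_nhdsWithin, hlt] with s hs hss₀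
      obtain ⟨hsI, hst⟩ := hs
      have hspos : 0 < s := htpos.trans hst
      have hdb := hDB s₀ hs₀I x hx y hy s hsI x hx y hy hss₀.le
      have hmax : max (max s₀ ((Ψ (nndist x x) : ℝ≥0) : ℝ)) ((Ψ (nndist y y) : ℝ≥0) : ℝ)
          = s₀ := by
        rw [nndist_self, nndist_self, hΨ0]
        simp [hs₀pos.le]
      rw [hmax] at hdb
      have h2 : s₀ / s ≤ s₀ / t := by
        have hst' : t < s := hst
        rw [div_le_div_iff₀ hspos htpos]
        nlinarith [hst', hs₀pos]
      have h3 : (s₀ / s) ^ αF ≤ (s₀ / t) ^ αF :=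
        Real.rpow_le_rpow (by positivity) h2 hαF.le
      rw [div_le_iff₀ (hFpos s₀ hs₀I x hx y hy)] at hdb
      calc F s x y ≤ cF * (s₀ / s) ^ αF * F s₀ x y := hdb
      _ ≤ B := by
          rw [hB_def]
          apply mul_le_mul_of_nonneg_right _ (hFpos s₀ hs₀I x hx y hy).le
          exact mul_le_mul_of_nonneg_left h3 hcF.le
    have hFlb : ∀ᶠ s in l, 0 ≤ F s x y := by
      filter_upwards [self_mem_nhdsWithin] with s hs
      exact (hFpos s hs.1 x hx y hy).le
    have hbddF : Filter.IsBoundedUnder (· ≤ ·) l (fun s => F s x y) :=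
      ⟨B, by rw [Filter.eventually_map]; exact hFub⟩
    set Lf : ℝ := Filter.limsup (fun s => F s x y) l with hLf_def
    have hLfnn : 0 ≤ Lf :=
      Filter.le_limsup_of_frequently_le hFlb.frequently hbddF
    have hLfF : Lf ≤ F t x y := hUB1 t ht x hx y hy ⟨s₀, hs₀I, hts₀⟩
    have hens : ∀ s : ℝ, 0 ≤ e s := fun s => (Real.exp_pos _).le
    have hkey : Filter.limsup (fun s => F s x y * e s) l ≤ Lf * e t := by
      have hco : Filter.IsCoboundedUnder (· ≤ ·) l (fun s => F s x y * e s) := by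
        apply Filter.IsBoundedUnder.isCoboundedUnder_le
        refine ⟨0, ?_⟩
        rw [Filter.eventually_map]
        filter_upwards [hFlb] with s hs
        exact mul_nonneg hs (hens s)
      have hδ : ∀ δ : ℝ, 0 < δ →
          Filter.limsup (fun s => F s x y * e s) l ≤ (Lf + δ) * (e t + δ) := by
        intro δ hδ0
        apply Filter.limsup_le_of_le hco
        have h1 : ∀ᶠ s in l, F s x y < Lf + δ :=
          Filter.eventually_lt_of_limsup_lt (by rw [← hLf_def]; linarith) hbddF
        have h2 : ∀ᶠ s in l, e s < e t + δ :=
          hel (Iio_mem_nhds (by linarith))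
        filter_upwards [h1, h2, hFlb] with s hsa hsb hsc
        exact mul_le_mul hsa.le hsb.le (hens s) (by linarith)
      have htend : Filter.Tendsto (fun δ : ℝ => (Lf + δ) * (e t + δ))
          (nhdsWithin 0 (Set.Ioi 0)) (nhds (Lf * e t)) := by
        have h0 : Filter.Tendsto (fun δ : ℝ => (Lf + δ) * (e t + δ)) (nhds 0)
            (nhds ((Lf + 0) * (e t + 0))) :=
          ((tendsto_const_nhds.add tendsto_id).mul (tendsto_const_nhds.add tendsto_id))
        simpa using h0.mono_left nhdsWithin_le_nhds
      apply ge_of_tendsto htend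
      filter_upwards [self_mem_nhdsWithin] with δ hδ0
      exact hδ δ hδ0
    have hfun : (fun s => F s x y * Real.exp (-(c₁ * Φ (c₂ * nndist x y) s)))
        = fun s => F s x y * e s := by
      funext s
      rw [hΦe]
    calc Filter.limsup (fun s => F s x y * Real.exp (-(c₁ * Φ (c₂ * nndist x y) s))) l
        = Filter.limsup (fun s => F s x y * e s) l := by rw [hfun]
    _ ≤ Lf * e t := hkey
    _ ≤ F t x y * e t := mul_le_mul_of_nonneg_right hLfF (hens t)
    _ = F t x y * Real.exp (-(c₁ * Φ (c₂ * nndist x y) t)) := by rw [hΦe]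
  -- (UB2) for H
  have hUB2H : ∀ t ∈ I, ∀ y ∈ W, UpperSemicontinuousOn
      (fun x => F t x y * Real.exp (-(c₁ * Φ (c₂ * nndist x y) t))) V := by
    intro t ht y hy
    have htpos : 0 < t := hI ht
    have hψcont : Continuous fun x : M =>
        Real.exp (-(c₁ * gsup Ψ (((c₂ * nndist x y : ℝ≥0) : ℝ), t))) := by
      apply Real.continuous_exp.comp
      apply Continuous.neg
      apply Continuous.mul continuous_const
      apply hgcont.comp_continuous
      · exact (NNReal.continuous_coe.comp (continuous_const.mul
          (Continuous.nndist continuous_id continuous_const))).prodMk continuous_const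
      · exact fun x => ⟨mem_univ _, htpos⟩
    intro x hx b hb
    simp only [hΦg] at hb ⊢
    have hfx : 0 < F t x y := hFpos t ht x hx y hy
    have hψx : (0:ℝ) < Real.exp (-(c₁ * gsup Ψ (((c₂ * nndist x y : ℝ≥0) : ℝ), t))) :=
      Real.exp_pos _
    have htd : Filter.Tendsto (fun δ : ℝ =>
        (F t x y + δ) * (Real.exp (-(c₁ * gsup Ψ (((c₂ * nndist x y : ℝ≥0) : ℝ), t))) + δ))
        (nhdsWithin 0 (Set.Ioi 0))
        (nhds (F t x y * Real.exp (-(c₁ * gsup Ψ (((c₂ * nndist x y : ℝ≥0) : ℝ), t))))) := by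
      have h0 : Filter.Tendsto (fun δ : ℝ =>
          (F t x y + δ) * (Real.exp (-(c₁ * gsup Ψ (((c₂ * nndist x y : ℝ≥0) : ℝ), t))) + δ))
          (nhds 0) (nhds ((F t x y + 0) *
            (Real.exp (-(c₁ * gsup Ψ (((c₂ * nndist x y : ℝ≥0) : ℝ), t))) + 0))) :=
        (tendsto_const_nhds.add tendsto_id).mul (tendsto_const_nhds.add tendsto_id)
      simpa using h0.mono_left nhdsWithin_le_nhds
    have hev1 : ∀ᶠ δ in nhdsWithin (0:ℝ) (Set.Ioi 0),
        (F t x y + δ) * (Real.exp (-(c₁ * gsup Ψ (((c₂ * nndist x y : ℝ≥0) : ℝ), t))) + δ)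
          < b := htd (Iio_mem_nhds hb)
    have hev : ∀ᶠ δ in nhdsWithin (0:ℝ) (Set.Ioi 0),
        ((F t x y + δ) * (Real.exp (-(c₁ * gsup Ψ (((c₂ * nndist x y : ℝ≥0) : ℝ), t))) + δ) < b
          ∧ δ ∈ Set.Ioi (0:ℝ)) :=
      hev1.and self_mem_nhdsWithin
    obtain ⟨δ, hδb, hδ0⟩ := hev.exists
    have h1 : ∀ᶠ x' in nhdsWithin x V, F t x' y < F t x y + δ :=
      hUB2 t ht y hy x hx (F t x y + δ) (lt_add_of_pos_right _ hδ0)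
    have h2 : ∀ᶠ x' in nhdsWithin x V,
        Real.exp (-(c₁ * gsup Ψ (((c₂ * nndist x' y : ℝ≥0) : ℝ), t))) <
          Real.exp (-(c₁ * gsup Ψ (((c₂ * nndist x y : ℝ≥0) : ℝ), t))) + δ :=
      ((hψcont.tendsto x).mono_left nhdsWithin_le_nhds)
        (Iio_mem_nhds (lt_add_of_pos_right _ hδ0))
    filter_upwards [h1, h2] with x' ha hbb
    calc F t x' y * Real.exp (-(c₁ * gsup Ψ (((c₂ * nndist x' y : ℝ≥0) : ℝ), t)))
        ≤ (F t x y + δ) * (Real.exp (-(c₁ * gsup Ψ (((c₂ * nndist x y : ℝ≥0) : ℝ), t))) + δ) :=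
          mul_le_mul ha.le hbb.le (Real.exp_pos _).le
            (by have hδ0' : (0:ℝ) < δ := hδ0; linarith)
    _ < b := hδb
  constructor
  · exact ⟨hFmeas, hUB1, hUB2,
      build_ub3 Ψ μ hcΨ hβ₁ hΨ1 I hI V W hV hW F hFpos αF cF hαF hcF hDB F
        (fun t _ x _ y _ => le_rfl)⟩
  · exact ⟨hHmeas, hUB1H, hUB2H,
      build_ub3 Ψ μ hcΨ hβ₁ hΨ1 I hI V W hV hW F hFpos αF cF hαF hcF hDB
        (fun t x y => F t x y * Real.exp (-(c₁ * Φ (c₂ * nndist x y) t))) hHF⟩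
end

section
/- Let R ∈ (0,∞], let V, W be open subsets of M with diam V ≤ R and diam W ≤ R, and let ν be a Borel measure on M satisfying the volume doubling property 0 < ν(B(x,2r)) ≤ c_vd ν(B(x,r)) < ∞ for all (x,r) ∈ (V ∪ W) × (0,R), for some constant c_vd ∈ (0,∞). For c₄ ∈ (0,∞) define F : (0,Ψ(R)] × V × W → (0,∞) (with time interval (0,∞) when R = ∞) by F_t(x,y) := c₄ ν(B(x,Ψ^{-1}(t)))^{−1/2} ν(B(y,Ψ^{-1}(t)))^{−1/2}. Then F is upper semicontinuous on its domain (hence Borel measurable and satisfies (UB1) and (UB2)) and F satisfies (DB)_Ψ: there exist α_F, c_F ∈ (0,∞) such that for any (t,x,y), (s,z,w) in the domain with s ≤ t, F_s(z,w)/F_t(x,y) ≤ c_F ( (t ∨ Ψ(d(x,z)) ∨ Ψ(d(y,w))) / s )^{α_F}. -/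
open scoped NNReal ENNReal
open MeasureTheory Set Filter Topology Metric

/-- A ball is an increasing union of smaller balls. -/
private lemma ball_eq_iUnion_aux {M : Type*} [MetricSpace M] (z : M) {r : ℝ} (hr : 0 < r) :
    ball z r = ⋃ n : ℕ, ball z (r - r / (n + 2)) := by
  ext w
  simp only [mem_iUnion, mem_ball]
  constructor
  · intro hw
    have hε : 0 < r - dist w z := by linarith
    obtain ⟨n, hn⟩ := exists_nat_gt (r / (r - dist w z))
    refine ⟨n, ?_⟩
    have h2 : r / ((n : ℝ) + 2) < r - dist w z := by
      rw [div_lt_iff₀ (by positivity)]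
      have : r / (r - dist w z) < (n : ℝ) + 2 := by linarith
      calc r = (r / (r - dist w z)) * (r - dist w z) := by field_simp
        _ < ((n : ℝ) + 2) * (r - dist w z) := by
            exact mul_lt_mul_of_pos_right this hε
        _ = (r - dist w z) * ((n:ℝ) + 2) := by ring
    linarith
  · rintro ⟨n, hn⟩
    have : 0 ≤ r / ((n : ℝ) + 2) := by positivity
    linarith

private lemma measure_ball_le_aux {M : Type*} [MetricSpace M] [MeasurableSpace M]
    (ν : Measure M) (z : M) {r : ℝ} (hr : 0 < r) {L : ℝ≥0∞}
    (h : ∀ r' : ℝ, 0 < r' → r' < r → ν (ball z r') ≤ L) : ν (ball z r) ≤ L := by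
  rw [ball_eq_iUnion_aux z hr]
  have hdir : Directed (fun x1 x2 => x1 ⊆ x2) (fun n : ℕ => ball z (r - r / (n + 2))) := by
    intro m n
    refine ⟨max m n, ball_subset_ball ?_, ball_subset_ball ?_⟩ <;>
    · have : (0:ℝ) < (m:ℝ) + 2 := by positivity
      gcongr <;> simp [Nat.le_max_left, Nat.le_max_right]
  rw [hdir.measure_iUnion]
  refine iSup_le fun n => ?_
  rcases le_or_gt (r - r / (n + 2)) 0 with h0 | h0
  · rw [ball_eq_empty.2 h0]; simp
  · refine h _ h0 ?_
    have hp : 0 < r / ((n:ℝ)+2) := by positivity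
    linarith

private lemma lt_measure_ball_aux {M : Type*} [MetricSpace M] [MeasurableSpace M]
    (ν : Measure M) (z : M) {r : ℝ} (hr : 0 < r) {m : ℝ≥0∞}
    (h : m < ν (ball z r)) : ∃ r' : ℝ, 0 < r' ∧ r' < r ∧ m < ν (ball z r') := by
  by_contra hc
  push_neg at hc
  have : ν (ball z r) ≤ m := measure_ball_le_aux ν z hr fun r' h1 h2 => hc r' h1 h2
  exact absurd h (not_lt.2 this)


set_option maxHeartbeats 1000000 in
/-- Under volume doubling for `ν` on `(V ∪ W) × (0,R)`, the volume function
`F_t(x,y) = c₄ ν(B(x,Ψ⁻¹(t)))^{-1/2} ν(B(y,Ψ⁻¹(t)))^{-1/2}` on `(0,Ψ(R)] × V × W`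
is positive, upper semicontinuous (hence Borel measurable and satisfies (UB1), (UB2)),
and satisfies (DB)_Ψ. -/
theorem dynkin_hunt_stmt9 {M : Type*} [MetricSpace M] [LocallyCompactSpace M]
    [TopologicalSpace.SeparableSpace M] [MeasurableSpace M] [BorelSpace M]
    (Ψ : ℝ≥0 ≃ₜ ℝ≥0) (cΨ β₁ β₂ : ℝ)
    (hcΨ : 0 < cΨ) (hβ₁ : 1 < β₁) (hβ₁₂ : β₁ ≤ β₂)
    (hΨ : ∀ r R : ℝ≥0, 0 < r → r ≤ R →
      cΨ⁻¹ * ((R : ℝ) / (r : ℝ)) ^ β₁ ≤ ((Ψ R : ℝ≥0) : ℝ) / ((Ψ r : ℝ≥0) : ℝ) ∧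
      ((Ψ R : ℝ≥0) : ℝ) / ((Ψ r : ℝ≥0) : ℝ) ≤ cΨ * ((R : ℝ) / (r : ℝ)) ^ β₂)
    (R : ℝ≥0∞) (hR : 0 < R)
    (V W : Set M) (hV : IsOpen V) (hW : IsOpen W)
    (hdV : EMetric.diam V ≤ R) (hdW : EMetric.diam W ≤ R)
    (ν : Measure M) (cvd : ℝ≥0) (hcvd : 0 < cvd)
    (hν : ∀ x ∈ V ∪ W, ∀ r : ℝ, 0 < r → ENNReal.ofReal r < R →
      0 < ν (Metric.ball x (2 * r)) ∧
      ν (Metric.ball x (2 * r)) ≤ (cvd : ℝ≥0∞) * ν (Metric.ball x r) ∧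
      ν (Metric.ball x r) < ⊤)
    (c₄ : ℝ) (hc₄ : 0 < c₄)
    (J : Set ℝ≥0)
    (hJ : J = {t : ℝ≥0 | 0 < t ∧
      (t : ℝ≥0∞) ≤ if R = ⊤ then ⊤ else ((Ψ R.toNNReal : ℝ≥0) : ℝ≥0∞)})
    (F : ℝ≥0 → M → M → ℝ)
    (hF : ∀ (t : ℝ≥0) (x y : M), F t x y =
      c₄ * ((ν (Metric.ball x ((Ψ.symm t : ℝ≥0) : ℝ))).toReal) ^ (-(2⁻¹ : ℝ)) *
        ((ν (Metric.ball y ((Ψ.symm t : ℝ≥0) : ℝ))).toReal) ^ (-(2⁻¹ : ℝ))) :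
    (∀ t ∈ J, ∀ x ∈ V, ∀ y ∈ W, 0 < F t x y) ∧
    UpperSemicontinuousOn (fun p : ℝ≥0 × M × M => F p.1 p.2.1 p.2.2) (J ×ˢ (V ×ˢ W)) ∧
    (Measurable fun p : (J ×ˢ (V ×ˢ W) : Set (ℝ≥0 × M × M)) =>
      F (p : ℝ≥0 × M × M).1 (p : ℝ≥0 × M × M).2.1 (p : ℝ≥0 × M × M).2.2) ∧
    -- (UB1)
    (∀ t ∈ J, ∀ x ∈ V, ∀ y ∈ W, (∃ s ∈ J, t < s) →
      Filter.limsup (fun s => F s x y) (nhdsWithin t (J ∩ Set.Ioi t)) ≤ F t x y) ∧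
    -- (UB2)
    (∀ t ∈ J, ∀ y ∈ W, UpperSemicontinuousOn (fun x => F t x y) V) ∧
    -- (DB)_Ψ
    (∃ αF cF : ℝ, 0 < αF ∧ 0 < cF ∧
      ∀ t ∈ J, ∀ x ∈ V, ∀ y ∈ W, ∀ s ∈ J, ∀ z ∈ V, ∀ w ∈ W, s ≤ t →
        F s z w / F t x y ≤
          cF * ((max (max (t : ℝ) ((Ψ (nndist x z) : ℝ≥0) : ℝ)) ((Ψ (nndist y w) : ℝ≥0) : ℝ))
            / (s : ℝ)) ^ αF) := by
  -- Ψ is positive on positives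
  have hΨpos : ∀ r : ℝ≥0, 0 < r → 0 < Ψ r := by
    intro r hr
    rw [pos_iff_ne_zero]
    intro h0
    have h1 := (hΨ r r hr le_rfl).1
    rw [h0] at h1
    have hr' : ((r:ℝ)/(r:ℝ)) = 1 := div_self (by exact_mod_cast hr.ne')
    rw [hr'] at h1
    simp only [NNReal.coe_zero, div_zero, Real.one_rpow, mul_one] at h1
    exact absurd h1 (not_le.2 (inv_pos.2 hcΨ))
  have hΨ0 : Ψ 0 = 0 := by
    rcases eq_or_lt_of_le (zero_le (a := Ψ.symm 0)) with h | h
    · have := Ψ.apply_symm_apply 0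
      rw [← h] at this
      exact this
    · have := hΨpos _ h
      rw [Ψ.apply_symm_apply 0] at this
      exact absurd this (lt_irrefl _)
  -- Ψ is strictly monotone
  have hmono : StrictMono (fun r => Ψ r) := by
    rcases Ψ.continuous.strictMono_of_inj Ψ.injective with h | h
    · exact h
    · exfalso
      have h1 := h (show (0:ℝ≥0) < 1 by norm_num)
      simp only [hΨ0] at h1
      exact absurd h1 (not_lt.2 zero_le)
  have hsymm_mono : ∀ a b : ℝ≥0, a ≤ b → Ψ.symm a ≤ Ψ.symm b := by
    intro a b hab
    by_contra h
    push_neg at h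
    have := hmono h
    simp only [Ψ.apply_symm_apply] at this
    exact absurd hab (not_le.2 this)
  have hσpos : ∀ t : ℝ≥0, 0 < t → 0 < ((Ψ.symm t : ℝ≥0) : ℝ) := by
    intro t ht
    have : Ψ.symm t ≠ 0 := by
      intro h
      have := congrArg Ψ h
      rw [Ψ.apply_symm_apply, hΨ0] at this
      exact ht.ne' this
    exact_mod_cast pos_iff_ne_zero.2 this
  -- membership in J gives radius bounds
  have hJmem : ∀ t ∈ J, 0 < t ∧ (R ≠ ⊤ → Ψ.symm t ≤ R.toNNReal) := by
    intro t ht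
    rw [hJ] at ht
    obtain ⟨ht0, htle⟩ := ht
    refine ⟨ht0, fun hRtop => ?_⟩
    rw [if_neg hRtop] at htle
    have : t ≤ Ψ R.toNNReal := by exact_mod_cast htle
    have h2 := hsymm_mono _ _ this
    rwa [Ψ.symm_apply_apply] at h2
  -- the key radius bound: for t ∈ J, ofReal (σ t / 2) < R
  have hrad : ∀ t ∈ J, ENNReal.ofReal (((Ψ.symm t : ℝ≥0) : ℝ) / 2) < R := by
    intro t ht
    obtain ⟨ht0, htR⟩ := hJmem t ht
    have hσ := hσpos t ht0
    rcases eq_or_ne R ⊤ with hT | hT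
    · rw [hT]; exact ENNReal.ofReal_lt_top
    · have h1 : ((Ψ.symm t : ℝ≥0) : ℝ) ≤ (R.toNNReal : ℝ) := by exact_mod_cast htR hT
      have h2 : ((Ψ.symm t : ℝ≥0) : ℝ) / 2 < (R.toNNReal : ℝ) := by linarith
      calc ENNReal.ofReal (((Ψ.symm t : ℝ≥0) : ℝ) / 2) < ENNReal.ofReal ((R.toNNReal : ℝ)) :=
            ENNReal.ofReal_lt_ofReal_iff_of_nonneg (by positivity) |>.2 h2
        _ = (R.toNNReal : ℝ≥0∞) := ENNReal.ofReal_coe_nnreal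
        _ = R := ENNReal.coe_toNNReal hT
  -- positivity and finiteness of ball measures on the domain
  have key : ∀ t ∈ J, ∀ p, p ∈ V ∪ W →
      0 < ν (ball p ((Ψ.symm t : ℝ≥0) : ℝ)) ∧ ν (ball p ((Ψ.symm t : ℝ≥0) : ℝ)) < ⊤ := by
    intro t ht p hp
    have ht0 := (hJmem t ht).1
    have hσ := hσpos t ht0
    have h1 := hν p hp (((Ψ.symm t : ℝ≥0) : ℝ) / 2) (by positivity) (hrad t ht)
    have h2 : 2 * (((Ψ.symm t : ℝ≥0) : ℝ) / 2) = ((Ψ.symm t : ℝ≥0) : ℝ) := by ring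
    rw [h2] at h1
    refine ⟨h1.1, lt_of_le_of_lt h1.2.1 ?_⟩
    exact ENNReal.mul_lt_top ENNReal.coe_lt_top h1.2.2
  -- toReal of the ball measures is positive on the domain
  have keyR : ∀ t ∈ J, ∀ p, p ∈ V ∪ W →
      0 < (ν (ball p ((Ψ.symm t : ℝ≥0) : ℝ))).toReal := by
    intro t ht p hp
    exact ENNReal.toReal_pos (key t ht p hp).1.ne' (key t ht p hp).2.ne
  -- Part 1 : positivity
  have hFpos : ∀ t ∈ J, ∀ x ∈ V, ∀ y ∈ W, 0 < F t x y := by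
    intro t ht x hx y hy
    rw [hF]
    have h1 := keyR t ht x (Or.inl hx)
    have h2 := keyR t ht y (Or.inr hy)
    positivity
  -- Part 2 : upper semicontinuity
  have husc : UpperSemicontinuousOn (fun p : ℝ≥0 × M × M => F p.1 p.2.1 p.2.2)
      (J ×ˢ (V ×ˢ W)) := by
    rintro ⟨t, x, y⟩ ⟨htJ, hxV, hyW⟩ c hc
    simp only [Set.mem_prod] at hxV hyW
    obtain ⟨hxV, hyW⟩ : x ∈ V ∧ y ∈ W := ⟨hxV, hyW⟩
    simp only at hc
    set a := (ν (ball x ((Ψ.symm t : ℝ≥0) : ℝ))).toReal with ha_def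
    set b := (ν (ball y ((Ψ.symm t : ℝ≥0) : ℝ))).toReal with hb_def
    have ha : 0 < a := keyR t htJ x (Or.inl hxV)
    have hb : 0 < b := keyR t htJ y (Or.inr hyW)
    have hFt : F t x y = c₄ * a ^ (-(2⁻¹ : ℝ)) * b ^ (-(2⁻¹ : ℝ)) := hF t x y
    -- pick a₀ < a
    have hg1 : ContinuousAt (fun u : ℝ => c₄ * u ^ (-(2⁻¹ : ℝ)) * b ^ (-(2⁻¹ : ℝ))) a := by
      have h1 : ContinuousAt (fun u : ℝ => u ^ (-(2⁻¹ : ℝ))) a :=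
        Real.continuousAt_rpow_const a _ (Or.inl ha.ne')
      exact (continuousAt_const.mul h1).mul continuousAt_const
    have hev1 : ∀ᶠ u in 𝓝[<] a, c₄ * u ^ (-(2⁻¹ : ℝ)) * b ^ (-(2⁻¹ : ℝ)) < c := by
      refine Filter.Tendsto.eventually_lt_const ?_ (hg1.tendsto.mono_left nhdsWithin_le_nhds)
      rw [← hFt]; exact hc
    have hev1' : ∀ᶠ u in 𝓝[<] a, 0 < u :=
      eventually_nhdsWithin_of_eventually_nhds (eventually_gt_nhds ha)
    obtain ⟨a₀, hga₀, ha₀pos, ha₀mem⟩ :=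
      (hev1.and (hev1'.and eventually_mem_nhdsWithin)).exists
    have ha₀lt : a₀ < a := ha₀mem
    -- pick b₀ < b
    have hg2 : ContinuousAt (fun v : ℝ => c₄ * a₀ ^ (-(2⁻¹ : ℝ)) * v ^ (-(2⁻¹ : ℝ))) b := by
      have h1 : ContinuousAt (fun v : ℝ => v ^ (-(2⁻¹ : ℝ))) b :=
        Real.continuousAt_rpow_const b _ (Or.inl hb.ne')
      exact continuousAt_const.mul h1
    have hev2 : ∀ᶠ v in 𝓝[<] b, c₄ * a₀ ^ (-(2⁻¹ : ℝ)) * v ^ (-(2⁻¹ : ℝ)) < c := by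
      refine Filter.Tendsto.eventually_lt_const hga₀ (hg2.tendsto.mono_left nhdsWithin_le_nhds)
    have hev2' : ∀ᶠ v in 𝓝[<] b, 0 < v :=
      eventually_nhdsWithin_of_eventually_nhds (eventually_gt_nhds hb)
    obtain ⟨b₀, hgb₀, hb₀pos, hb₀mem⟩ :=
      (hev2.and (hev2'.and eventually_mem_nhdsWithin)).exists
    have hb₀lt : b₀ < b := hb₀mem
    -- inner radii
    have hσt := hσpos t (hJmem t htJ).1
    have hxfin := (key t htJ x (Or.inl hxV)).2
    have hyfin := (key t htJ y (Or.inr hyW)).2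
    have hax : ENNReal.ofReal a₀ < ν (ball x ((Ψ.symm t : ℝ≥0) : ℝ)) :=
      (ENNReal.ofReal_lt_iff_lt_toReal ha₀pos.le hxfin.ne).2 ha₀lt
    have hby : ENNReal.ofReal b₀ < ν (ball y ((Ψ.symm t : ℝ≥0) : ℝ)) :=
      (ENNReal.ofReal_lt_iff_lt_toReal hb₀pos.le hyfin.ne).2 hb₀lt
    obtain ⟨r₁, hr₁0, hr₁lt, hνr₁⟩ := lt_measure_ball_aux ν x hσt hax
    obtain ⟨r₂, hr₂0, hr₂lt, hνr₂⟩ := lt_measure_ball_aux ν y hσt hby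
    -- eventual inclusion conditions
    have hcont1 : Continuous (fun p : ℝ≥0 × M × M =>
        ((Ψ.symm p.1 : ℝ≥0) : ℝ) - dist p.2.1 x) := by
      exact (NNReal.continuous_coe.comp (Ψ.symm.continuous.comp continuous_fst)).sub
        ((continuous_fst.comp continuous_snd).dist continuous_const)
    have hcont2 : Continuous (fun p : ℝ≥0 × M × M =>
        ((Ψ.symm p.1 : ℝ≥0) : ℝ) - dist p.2.2 y) := by
      exact (NNReal.continuous_coe.comp (Ψ.symm.continuous.comp continuous_fst)).sub
        ((continuous_snd.comp continuous_snd).dist continuous_const)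
    have hev_x : ∀ᶠ p in 𝓝 (t, x, y),
        r₁ < ((Ψ.symm p.1 : ℝ≥0) : ℝ) - dist p.2.1 x := by
      refine Filter.Tendsto.eventually_const_lt ?_ (hcont1.tendsto (t, x, y))
      simpa [dist_self] using hr₁lt
    have hev_y : ∀ᶠ p in 𝓝 (t, x, y),
        r₂ < ((Ψ.symm p.1 : ℝ≥0) : ℝ) - dist p.2.2 y := by
      refine Filter.Tendsto.eventually_const_lt ?_ (hcont2.tendsto (t, x, y))
      simpa [dist_self] using hr₂lt
    filter_upwards [mem_nhdsWithin_of_mem_nhds (hev_x.and hev_y), self_mem_nhdsWithin]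
      with p hp hpD
    obtain ⟨hp1, hp2⟩ := hp
    have hpJ : p.1 ∈ J := hpD.1
    have hpV : p.2.1 ∈ V := hpD.2.1
    have hpW : p.2.2 ∈ W := hpD.2.2
    -- inclusion of balls
    have hsub1 : ball x r₁ ⊆ ball p.2.1 ((Ψ.symm p.1 : ℝ≥0) : ℝ) := by
      intro w hw
      rw [mem_ball] at hw ⊢
      have h3 := dist_triangle w x p.2.1
      have h4 : dist x p.2.1 = dist p.2.1 x := dist_comm _ _
      linarith
    have hsub2 : ball y r₂ ⊆ ball p.2.2 ((Ψ.symm p.1 : ℝ≥0) : ℝ) := by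
      intro w hw
      rw [mem_ball] at hw ⊢
      have h3 := dist_triangle w y p.2.2
      have h4 : dist y p.2.2 = dist p.2.2 y := dist_comm _ _
      linarith
    have hfin1 := (key p.1 hpJ p.2.1 (Or.inl hpV)).2
    have hfin2 := (key p.1 hpJ p.2.2 (Or.inr hpW)).2
    have hA : a₀ < (ν (ball p.2.1 ((Ψ.symm p.1 : ℝ≥0) : ℝ))).toReal := by
      refine (ENNReal.ofReal_lt_iff_lt_toReal ha₀pos.le hfin1.ne).1 ?_
      exact lt_of_lt_of_le hνr₁ (measure_mono hsub1)
    have hB : b₀ < (ν (ball p.2.2 ((Ψ.symm p.1 : ℝ≥0) : ℝ))).toReal := by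
      refine (ENNReal.ofReal_lt_iff_lt_toReal hb₀pos.le hfin2.ne).1 ?_
      exact lt_of_lt_of_le hνr₂ (measure_mono hsub2)
    show F p.1 p.2.1 p.2.2 < c
    rw [hF]
    refine lt_of_le_of_lt ?_ hgb₀
    have h1' : (ν (ball p.2.1 ((Ψ.symm p.1 : ℝ≥0) : ℝ))).toReal ^ (-(2⁻¹ : ℝ)) ≤
        a₀ ^ (-(2⁻¹ : ℝ)) :=
      Real.rpow_le_rpow_of_nonpos ha₀pos hA.le (by norm_num)
    have h2' : (ν (ball p.2.2 ((Ψ.symm p.1 : ℝ≥0) : ℝ))).toReal ^ (-(2⁻¹ : ℝ)) ≤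
        b₀ ^ (-(2⁻¹ : ℝ)) :=
      Real.rpow_le_rpow_of_nonpos hb₀pos hB.le (by norm_num)
    have hBnn : (0:ℝ) ≤ (ν (ball p.2.2 ((Ψ.symm p.1 : ℝ≥0) : ℝ))).toReal ^ (-(2⁻¹ : ℝ)) :=
      Real.rpow_nonneg ENNReal.toReal_nonneg _
    exact mul_le_mul (mul_le_mul_of_nonneg_left h1' hc₄.le) h2' hBnn
      (by positivity)
  haveI : SecondCountableTopology M :=
    UniformSpace.secondCountable_of_separable M
  -- Part 3 : measurability
  have hmeas : Measurable fun p : (J ×ˢ (V ×ˢ W) : Set (ℝ≥0 × M × M)) =>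
      F (p : ℝ≥0 × M × M).1 (p : ℝ≥0 × M × M).2.1 (p : ℝ≥0 × M × M).2.2 := by
    have husc' : UpperSemicontinuous (fun p : (J ×ˢ (V ×ˢ W) : Set (ℝ≥0 × M × M)) =>
        F (p : ℝ≥0 × M × M).1 (p : ℝ≥0 × M × M).2.1 (p : ℝ≥0 × M × M).2.2) := by
      intro p c hc
      have h := husc (p : ℝ≥0 × M × M) p.2 c hc
      have hmap : Tendsto (Subtype.val : _ → ℝ≥0 × M × M) (𝓝 p)
          (𝓝[J ×ˢ (V ×ˢ W)] (p : ℝ≥0 × M × M)) := by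
        rw [← map_nhds_subtype_val]
        exact tendsto_map
      exact hmap.eventually h
    exact husc'.measurable
  -- Part 4 : (UB1)
  have hub1 : ∀ t ∈ J, ∀ x ∈ V, ∀ y ∈ W, (∃ s ∈ J, t < s) →
      Filter.limsup (fun s => F s x y) (nhdsWithin t (J ∩ Set.Ioi t)) ≤ F t x y := by
    intro t ht x hx y hy _
    rcases (nhdsWithin t (J ∩ Set.Ioi t)).eq_or_neBot with hbot | hne
    · rw [hbot, Filter.limsup_eq]
      have hset : {a : ℝ | ∀ᶠ n in (⊥ : Filter ℝ≥0), F n x y ≤ a} = Set.univ := by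
        simp
      have hnb : ¬ BddBelow (Set.univ : Set ℝ) := by
        rintro ⟨b, hb⟩
        have := hb (Set.mem_univ (b - 1))
        linarith
      rw [hset, Real.sInf_of_not_bddBelow hnb]
      exact (hFpos t ht x hx y hy).le
    · refine le_of_forall_gt_imp_ge_of_dense fun c hc => ?_
      have hmap : Tendsto (fun s : ℝ≥0 => (s, x, y)) (nhdsWithin t (J ∩ Set.Ioi t))
          (𝓝[J ×ˢ (V ×ˢ W)] (t, x, y)) := by
        refine tendsto_nhdsWithin_of_tendsto_nhds_of_eventually_within _ ?_ ?_
        · exact ((continuous_id.prodMk continuous_const).tendsto t).mono_left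
            nhdsWithin_le_nhds
        · filter_upwards [eventually_mem_nhdsWithin] with s hs
          exact ⟨hs.1, hx, hy⟩
      have hev : ∀ᶠ s in nhdsWithin t (J ∩ Set.Ioi t), F s x y < c :=
        hmap.eventually (husc (t, x, y) ⟨ht, hx, hy⟩ c hc)
      have hlow : ∀ᶠ s in nhdsWithin t (J ∩ Set.Ioi t), (0:ℝ) ≤ F s x y := by
        filter_upwards [eventually_mem_nhdsWithin] with s hs
        exact (hFpos s hs.1 x hx y hy).le
      exact Filter.limsup_le_of_le (isCoboundedUnder_le_of_eventually_le _ hlow)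
        (hev.mono fun s h => h.le)
  -- Part 5 : (UB2)
  have hub2 : ∀ t ∈ J, ∀ y ∈ W, UpperSemicontinuousOn (fun x => F t x y) V := by
    intro t ht y hy x hx c hc
    have hmap : Tendsto (fun x : M => (t, x, y)) (𝓝[V] x)
        (𝓝[J ×ˢ (V ×ˢ W)] (t, x, y)) := by
      refine tendsto_nhdsWithin_of_tendsto_nhds_of_eventually_within _ ?_ ?_
      · exact ((continuous_const.prodMk
          (continuous_id.prodMk continuous_const)).tendsto x).mono_left nhdsWithin_le_nhds
      · filter_upwards [eventually_mem_nhdsWithin] with z hz using ⟨ht, hz, hy⟩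
    exact hmap.eventually (husc (t, x, y) ⟨ht, hx, hy⟩ c hc)
  -- doubling iteration
  have iter : ∀ (k : ℕ) (q : M), q ∈ V ∪ W → ∀ r : ℝ, 0 < r →
      (∀ j : ℕ, j < k → ENNReal.ofReal (2 ^ j * r) < R) →
      ν (ball q (2 ^ k * r)) ≤ (cvd : ℝ≥0∞) ^ k * ν (ball q r) := by
    intro k
    induction k with
    | zero => intro q hq r hr _; simp
    | succ k ih =>
      intro q hq r hr hcond
      have h1 : (2:ℝ) ^ (k+1) * r = 2 * (2 ^ k * r) := by ring
      have h2 : 0 < (2:ℝ) ^ k * r := by positivity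
      have h3 := (hν q hq (2 ^ k * r) h2 (hcond k (Nat.lt_succ_self k))).2.1
      rw [h1]
      calc ν (ball q (2 * (2 ^ k * r))) ≤ (cvd : ℝ≥0∞) * ν (ball q (2 ^ k * r)) := h3
        _ ≤ (cvd : ℝ≥0∞) * ((cvd : ℝ≥0∞) ^ k * ν (ball q r)) :=
            mul_le_mul_right (ih q hq r hr fun j hj => hcond j (hj.trans (Nat.lt_succ_self k))) _
        _ = (cvd : ℝ≥0∞) ^ (k+1) * ν (ball q r) := by rw [pow_succ]; ring
  refine ⟨hFpos, husc, hmeas, hub1, hub2, ?_⟩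
  -- constants
  set c' : ℝ := max (cvd : ℝ) 2 with hc'def
  have hc'2 : (2:ℝ) ≤ c' := le_max_right _ _
  have hc'pos : (0:ℝ) < c' := lt_of_lt_of_le two_pos hc'2
  set g : ℝ := Real.logb 2 c' with hgdef
  have hg1 : 1 ≤ g := by
    rw [hgdef]
    calc (1:ℝ) = Real.logb 2 2 := (Real.logb_self_eq_one (by norm_num)).symm
      _ ≤ Real.logb 2 c' := Real.logb_le_logb_of_le one_lt_two two_pos hc'2
  have hβ₁pos : (0:ℝ) < β₁ := lt_trans one_pos hβ₁
  set γ : ℝ := g / β₁ with hγdef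
  have hγpos : 0 < γ := div_pos (lt_of_lt_of_le one_pos hg1) hβ₁pos
  set cF : ℝ := c' * (2:ℝ) ^ g * cΨ ^ γ with hcFdef
  have hcFpos : 0 < cF := by positivity
  refine ⟨γ, cF, hγpos, hcFpos, ?_⟩
  intro t ht x hx y hy s hs z hz w hw hst
  set T : ℝ≥0 := max (max t (Ψ (nndist x z))) (Ψ (nndist y w)) with hTdef
  have htT : t ≤ T := le_trans (le_max_left _ _) (le_max_left _ _)
  have hsT : s ≤ T := hst.trans htT
  have ht0 : 0 < t := (hJmem t ht).1
  have hs0 : 0 < s := (hJmem s hs).1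
  have hT0 : 0 < T := lt_of_lt_of_le ht0 htT
  have hTr : (max (max (t:ℝ) ((Ψ (nndist x z) : ℝ≥0) : ℝ)) ((Ψ (nndist y w) : ℝ≥0) : ℝ))
      = (T:ℝ) := by
    rw [hTdef]; push_cast; rfl
  have hσt : 0 < ((Ψ.symm t : ℝ≥0) : ℝ) := hσpos t ht0
  have hσs : 0 < ((Ψ.symm s : ℝ≥0) : ℝ) := hσpos s hs0
  have hσT : 0 < ((Ψ.symm T : ℝ≥0) : ℝ) := hσpos T hT0
  have hσsT : ((Ψ.symm s : ℝ≥0) : ℝ) ≤ ((Ψ.symm T : ℝ≥0) : ℝ) := by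
    exact_mod_cast hsymm_mono s T hsT
  have hσsΨpos : 0 < Ψ.symm s := by exact_mod_cast hσs
  -- comparison of radii via hΨ
  set Q : ℝ := (cΨ * ((T:ℝ)/(s:ℝ))) ^ (β₁⁻¹) with hQdef
  have hTspos : 0 < (T:ℝ)/(s:ℝ) := by
    have : (0:ℝ) < (s:ℝ) := by exact_mod_cast hs0
    have hT' : (0:ℝ) < (T:ℝ) := by exact_mod_cast hT0
    positivity
  have hQpos : 0 < Q := by rw [hQdef]; positivity
  have hratio : ((Ψ.symm T : ℝ≥0) : ℝ) / ((Ψ.symm s : ℝ≥0) : ℝ) ≤ Q := by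
    have h1 := (hΨ (Ψ.symm s) (Ψ.symm T) hσsΨpos (hsymm_mono s T hsT)).1
    rw [Ψ.apply_symm_apply, Ψ.apply_symm_apply] at h1
    have h2 : (((Ψ.symm T : ℝ≥0) : ℝ) / ((Ψ.symm s : ℝ≥0) : ℝ)) ^ β₁
        ≤ cΨ * ((T:ℝ)/(s:ℝ)) := by
      have h2' := mul_le_mul_of_nonneg_left h1 hcΨ.le
      rwa [← mul_assoc, mul_inv_cancel₀ hcΨ.ne', one_mul] at h2'
    have h3 : ((((Ψ.symm T : ℝ≥0) : ℝ) / ((Ψ.symm s : ℝ≥0) : ℝ)) ^ β₁) ^ (β₁⁻¹) ≤ Q :=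
      Real.rpow_le_rpow (by positivity) h2 (by positivity)
    rwa [← Real.rpow_mul (by positivity), mul_inv_cancel₀ hβ₁pos.ne', Real.rpow_one] at h3
  have hQ1 : 1 ≤ Q := by
    refine le_trans ?_ hratio
    rw [le_div_iff₀ hσs]
    linarith
  set k : ℕ := ⌈Real.logb 2 Q⌉₊ with hkdef
  have hk_low : Q ≤ (2:ℝ) ^ k := by
    have h1 : Real.logb 2 Q ≤ (k:ℝ) := Nat.le_ceil _
    have h2 := Real.rpow_le_rpow_of_exponent_le one_le_two h1
    rwa [Real.rpow_logb two_pos (by norm_num) hQpos, Real.rpow_natCast] at h2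
  have hk_high : (2:ℝ) ^ k ≤ 2 * Q := by
    have h1 : (k:ℝ) ≤ Real.logb 2 Q + 1 :=
      (Nat.ceil_lt_add_one (Real.logb_nonneg one_lt_two hQ1)).le
    have h2 := Real.rpow_le_rpow_of_exponent_le one_le_two h1
    rwa [Real.rpow_add two_pos, Real.rpow_logb two_pos (by norm_num) hQpos, Real.rpow_one,
      Real.rpow_natCast, mul_comm] at h2
  have hσTσs : ((Ψ.symm T : ℝ≥0) : ℝ) ≤ 2 ^ k * ((Ψ.symm s : ℝ≥0) : ℝ) := by
    have h1 : ((Ψ.symm T : ℝ≥0) : ℝ) / ((Ψ.symm s : ℝ≥0) : ℝ) ≤ 2 ^ k := hratio.trans hk_low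
    rwa [div_le_iff₀ hσs] at h1
  clear_value c' g γ cF T Q k
  -- bound on σT relative to R
  have hσTR : R ≠ ⊤ → ((Ψ.symm T : ℝ≥0) : ℝ) ≤ (R.toNNReal : ℝ) := by
    intro hRT
    have h1 : t ≤ Ψ R.toNNReal := by
      rw [hJ] at ht
      obtain ⟨_, h⟩ := ht
      rw [if_neg hRT] at h
      exact_mod_cast h
    have h2 : nndist x z ≤ R.toNNReal := by
      have h2' : edist x z ≤ R := le_trans (EMetric.edist_le_diam_of_mem hx hz) hdV
      rw [edist_nndist, ← ENNReal.coe_toNNReal hRT, ENNReal.coe_le_coe] at h2'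
      exact h2'
    have h3 : nndist y w ≤ R.toNNReal := by
      have h3' : edist y w ≤ R := le_trans (EMetric.edist_le_diam_of_mem hy hw) hdW
      rw [edist_nndist, ← ENNReal.coe_toNNReal hRT, ENNReal.coe_le_coe] at h3'
      exact h3'
    have h4 : T ≤ Ψ R.toNNReal := by
      rw [hTdef]
      exact max_le (max_le h1 (hmono.monotone h2)) (hmono.monotone h3)
    have h5 := hsymm_mono _ _ h4
    rw [Ψ.symm_apply_apply] at h5
    exact_mod_cast h5
  -- the pairwise measure comparison
  have pair_bound : ∀ p q : M, p ∈ V ∪ W → q ∈ V ∪ W →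
      dist p q ≤ ((Ψ.symm T : ℝ≥0) : ℝ) →
      ν (ball p ((Ψ.symm t : ℝ≥0) : ℝ)) ≤
        (cvd : ℝ≥0∞) ^ (k+1) * ν (ball q ((Ψ.symm s : ℝ≥0) : ℝ)) := by
    intro p q hp hq hpq
    set ρ : ℝ := max ((Ψ.symm t : ℝ≥0) : ℝ) (dist p q) with hρdef
    have hρpos : 0 < ρ := lt_of_lt_of_le hσt (le_max_left _ _)
    have hσtT : ((Ψ.symm t : ℝ≥0) : ℝ) ≤ ((Ψ.symm T : ℝ≥0) : ℝ) := by
      exact_mod_cast hsymm_mono t T htT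
    have hρT : ρ ≤ ((Ψ.symm T : ℝ≥0) : ℝ) := max_le hσtT hpq
    have hsub : ball p ((Ψ.symm t : ℝ≥0) : ℝ) ⊆ ball q (2 * ρ) := by
      intro u hu
      rw [mem_ball] at hu ⊢
      have h6 := dist_triangle u p q
      have h7 : ((Ψ.symm t : ℝ≥0) : ℝ) ≤ ρ := le_max_left _ _
      have h8 : dist p q ≤ ρ := le_max_right _ _
      linarith
    refine le_trans (measure_mono hsub) ?_
    refine measure_ball_le_aux ν q (by positivity) ?_
    intro r'' hr''0 hr''lt
    set r : ℝ := r'' / 2 ^ (k+1) with hrdef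
    have hr0 : 0 < r := by positivity
    have hr''eq : r'' = 2 ^ (k+1) * r := by rw [hrdef]; field_simp
    have hrbound : ∀ j : ℕ, j < k+1 → (2:ℝ) ^ j * r ≤ r'' / 2 := by
      intro j hj
      have h9 : (2:ℝ) ^ j ≤ 2 ^ k := pow_le_pow_right₀ one_le_two (Nat.lt_succ_iff.1 hj)
      have h10 : (2:ℝ) ^ j * r ≤ 2 ^ k * r := mul_le_mul_of_nonneg_right h9 hr0.le
      have h11 : (2:ℝ) ^ k * r = r'' / 2 := by
        rw [hrdef, pow_succ]
        field_simp
      linarith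
    have hcond : ∀ j : ℕ, j < k+1 → ENNReal.ofReal (2 ^ j * r) < R := by
      intro j hj
      have h12 : (2:ℝ) ^ j * r ≤ r'' / 2 := hrbound j hj
      have h13 : r'' / 2 < ρ := by linarith
      rcases eq_or_ne R ⊤ with hRT | hRT
      · rw [hRT]; exact ENNReal.ofReal_lt_top
      · have h14 : ((Ψ.symm T : ℝ≥0) : ℝ) ≤ (R.toNNReal : ℝ) := hσTR hRT
        have h15 : (2:ℝ) ^ j * r < (R.toNNReal : ℝ) := by linarith
        have h16 : (0:ℝ) < (R.toNNReal : ℝ) := by linarith [mul_pos (pow_pos two_pos j) hr0]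
        calc ENNReal.ofReal ((2:ℝ) ^ j * r) < ENNReal.ofReal ((R.toNNReal : ℝ)) :=
              (ENNReal.ofReal_lt_ofReal_iff h16).2 h15
          _ = (R.toNNReal : ℝ≥0∞) := ENNReal.ofReal_coe_nnreal
          _ = R := ENNReal.coe_toNNReal hRT
    rw [hr''eq]
    calc ν (ball q (2 ^ (k+1) * r)) ≤ (cvd : ℝ≥0∞) ^ (k+1) * ν (ball q r) :=
          iter (k+1) q hq r hr0 hcond
      _ ≤ (cvd : ℝ≥0∞) ^ (k+1) * ν (ball q ((Ψ.symm s : ℝ≥0) : ℝ)) := by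
          refine mul_le_mul_right (measure_mono (ball_subset_ball ?_)) _
          have h17 : r'' < 2 * ρ := hr''lt
          have h18 : r < ρ / 2 ^ k := by
            rw [hrdef, pow_succ, div_lt_div_iff₀ (by positivity) (by positivity)]
            nlinarith [pow_pos (two_pos (α := ℝ)) k]
          have h19 : ρ / 2 ^ k ≤ ((Ψ.symm s : ℝ≥0) : ℝ) := by
            rw [div_le_iff₀ (by positivity)]
            calc ρ ≤ ((Ψ.symm T : ℝ≥0) : ℝ) := hρT
              _ ≤ 2 ^ k * ((Ψ.symm s : ℝ≥0) : ℝ) := hσTσs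
              _ = ((Ψ.symm s : ℝ≥0) : ℝ) * 2 ^ k := by ring
          linarith
  -- distances are controlled by σT
  have hdxz : dist x z ≤ ((Ψ.symm T : ℝ≥0) : ℝ) := by
    have h1 : Ψ (nndist x z) ≤ T := by
      rw [hTdef]; exact le_trans (le_max_right _ _) (le_max_left _ _)
    have h2 := hsymm_mono _ _ h1
    rw [Ψ.symm_apply_apply] at h2
    rw [dist_nndist]
    exact_mod_cast h2
  have hdyw : dist y w ≤ ((Ψ.symm T : ℝ≥0) : ℝ) := by
    have h1 : Ψ (nndist y w) ≤ T := by rw [hTdef]; exact le_max_right _ _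
    have h2 := hsymm_mono _ _ h1
    rw [Ψ.symm_apply_apply] at h2
    rw [dist_nndist]
    exact_mod_cast h2
  have hbx := pair_bound x z (Or.inl hx) (Or.inl hz) hdxz
  have hby := pair_bound y w (Or.inr hy) (Or.inr hw) hdyw
  -- move to real numbers
  have hA1pos : 0 < (ν (ball x ((Ψ.symm t : ℝ≥0) : ℝ))).toReal := keyR t ht x (Or.inl hx)
  have hB1pos : 0 < (ν (ball y ((Ψ.symm t : ℝ≥0) : ℝ))).toReal := keyR t ht y (Or.inr hy)
  have hA2pos : 0 < (ν (ball z ((Ψ.symm s : ℝ≥0) : ℝ))).toReal := keyR s hs z (Or.inl hz)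
  have hB2pos : 0 < (ν (ball w ((Ψ.symm s : ℝ≥0) : ℝ))).toReal := keyR s hs w (Or.inr hw)
  have hA2fin := (key s hs z (Or.inl hz)).2
  have hB2fin := (key s hs w (Or.inr hw)).2
  have hA1le : (ν (ball x ((Ψ.symm t : ℝ≥0) : ℝ))).toReal ≤
      ((cvd:ℝ)) ^ (k+1) * (ν (ball z ((Ψ.symm s : ℝ≥0) : ℝ))).toReal := by
    have hfin : (cvd : ℝ≥0∞) ^ (k+1) * ν (ball z ((Ψ.symm s : ℝ≥0) : ℝ)) ≠ ⊤ :=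
      ENNReal.mul_ne_top (by simp) hA2fin.ne
    have h2 := ENNReal.toReal_mono hfin hbx
    rwa [ENNReal.toReal_mul, ENNReal.toReal_pow, ENNReal.coe_toReal] at h2
  have hB1le : (ν (ball y ((Ψ.symm t : ℝ≥0) : ℝ))).toReal ≤
      ((cvd:ℝ)) ^ (k+1) * (ν (ball w ((Ψ.symm s : ℝ≥0) : ℝ))).toReal := by
    have hfin : (cvd : ℝ≥0∞) ^ (k+1) * ν (ball w ((Ψ.symm s : ℝ≥0) : ℝ)) ≠ ⊤ :=
      ENNReal.mul_ne_top (by simp) hB2fin.ne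
    have h2 := ENNReal.toReal_mono hfin hby
    rwa [ENNReal.toReal_mul, ENNReal.toReal_pow, ENNReal.coe_toReal] at h2
  -- bound the constant
  have hckK : ((cvd:ℝ)) ^ (k+1) ≤ cF * ((T:ℝ)/(s:ℝ)) ^ γ := by
    have hcvdc' : (cvd:ℝ) ≤ c' := by rw [hc'def]; exact le_max_left _ _
    have h1 : ((cvd:ℝ)) ^ (k+1) ≤ c' ^ (k+1) := pow_le_pow_left₀ cvd.coe_nonneg hcvdc' _
    have h2 : c' ^ k = ((2:ℝ) ^ k) ^ g := by
      have h3 : c' = (2:ℝ) ^ g := by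
        rw [hgdef]; exact (Real.rpow_logb two_pos (by norm_num) hc'pos).symm
      rw [h3, ← Real.rpow_natCast ((2:ℝ) ^ g) k, ← Real.rpow_mul (by norm_num : (0:ℝ) ≤ 2),
        mul_comm, Real.rpow_mul (by norm_num : (0:ℝ) ≤ 2), Real.rpow_natCast]
    have h4 : ((2:ℝ) ^ k) ^ g ≤ (2 * Q) ^ g :=
      Real.rpow_le_rpow (by positivity) hk_high (by linarith)
    have h5 : ((2:ℝ) * Q) ^ g = 2 ^ g * Q ^ g := Real.mul_rpow (by norm_num) hQpos.le
    have h6 : Q ^ g = cΨ ^ γ * ((T:ℝ)/(s:ℝ)) ^ γ := by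
      rw [hQdef, ← Real.rpow_mul (by positivity)]
      have h7 : β₁⁻¹ * g = γ := by rw [hγdef]; field_simp
      rw [h7, Real.mul_rpow hcΨ.le hTspos.le]
    calc ((cvd:ℝ)) ^ (k+1) ≤ c' ^ (k+1) := h1
      _ = c' * ((2:ℝ) ^ k) ^ g := by rw [pow_succ, h2]; ring
      _ ≤ c' * (2 * Q) ^ g := mul_le_mul_of_nonneg_left h4 hc'pos.le
      _ = cF * ((T:ℝ)/(s:ℝ)) ^ γ := by rw [h5, h6, hcFdef]; ring
  obtain ⟨K, hKdef⟩ : ∃ K : ℝ, K = cF * ((T:ℝ)/(s:ℝ)) ^ γ := ⟨_, rfl⟩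
  have hKpos : 0 < K := hKdef ▸ mul_pos hcFpos (Real.rpow_pos_of_pos hTspos _)
  rw [← hKdef] at hckK
  have hA1K : (ν (ball x ((Ψ.symm t : ℝ≥0) : ℝ))).toReal ≤
      K * (ν (ball z ((Ψ.symm s : ℝ≥0) : ℝ))).toReal :=
    le_trans hA1le (mul_le_mul_of_nonneg_right hckK hA2pos.le)
  have hB1K : (ν (ball y ((Ψ.symm t : ℝ≥0) : ℝ))).toReal ≤
      K * (ν (ball w ((Ψ.symm s : ℝ≥0) : ℝ))).toReal :=
    le_trans hB1le (mul_le_mul_of_nonneg_right hckK hB2pos.le)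
  -- key elementary step
  have step : ∀ u v : ℝ, 0 < u → 0 < v → u ≤ K * v →
      v ^ (-(2⁻¹:ℝ)) ≤ K ^ (2⁻¹:ℝ) * u ^ (-(2⁻¹:ℝ)) := by
    intro u v hu hv huv
    have h1 : u ^ (2⁻¹:ℝ) ≤ K ^ (2⁻¹:ℝ) * v ^ (2⁻¹:ℝ) := by
      rw [← Real.mul_rpow hKpos.le hv.le]
      exact Real.rpow_le_rpow hu.le huv (by norm_num)
    have hv2 : 0 < v ^ (2⁻¹:ℝ) := Real.rpow_pos_of_pos hv _
    have hu2 : 0 < u ^ (2⁻¹:ℝ) := Real.rpow_pos_of_pos hu _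
    rw [Real.rpow_neg hv.le, Real.rpow_neg hu.le, ← div_eq_mul_inv,
      le_div_iff₀ hu2]
    calc (v ^ (2⁻¹:ℝ))⁻¹ * u ^ (2⁻¹:ℝ) ≤ (v ^ (2⁻¹:ℝ))⁻¹ * (K ^ (2⁻¹:ℝ) * v ^ (2⁻¹:ℝ)) :=
          mul_le_mul_of_nonneg_left h1 (by positivity)
      _ = K ^ (2⁻¹:ℝ) := by field_simp
  have hfin1 := step _ _ hA1pos hA2pos hA1K
  have hfin2 := step _ _ hB1pos hB2pos hB1K
  have hKK : K ^ (2⁻¹:ℝ) * K ^ (2⁻¹:ℝ) = K := by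
    rw [← Real.rpow_add hKpos]
    norm_num
  rw [div_le_iff₀ (hFpos t ht x hx y hy), hTr, hF s z w, hF t x y]
  calc c₄ * (ν (ball z ((Ψ.symm s : ℝ≥0) : ℝ))).toReal ^ (-(2⁻¹:ℝ)) *
        (ν (ball w ((Ψ.symm s : ℝ≥0) : ℝ))).toReal ^ (-(2⁻¹:ℝ))
      ≤ c₄ * (K ^ (2⁻¹:ℝ) * (ν (ball x ((Ψ.symm t : ℝ≥0) : ℝ))).toReal ^ (-(2⁻¹:ℝ))) *
        (K ^ (2⁻¹:ℝ) * (ν (ball y ((Ψ.symm t : ℝ≥0) : ℝ))).toReal ^ (-(2⁻¹:ℝ))) := by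
        refine mul_le_mul (mul_le_mul_of_nonneg_left hfin1 hc₄.le) hfin2
          (Real.rpow_nonneg ENNReal.toReal_nonneg _) ?_
        have := Real.rpow_pos_of_pos hA1pos (-(2⁻¹:ℝ))
        positivity
    _ = (K ^ (2⁻¹:ℝ) * K ^ (2⁻¹:ℝ)) *
        (c₄ * (ν (ball x ((Ψ.symm t : ℝ≥0) : ℝ))).toReal ^ (-(2⁻¹:ℝ)) *
          (ν (ball y ((Ψ.symm t : ℝ≥0) : ℝ))).toReal ^ (-(2⁻¹:ℝ))) := by ring
    _ = K * (c₄ * (ν (ball x ((Ψ.symm t : ℝ≥0) : ℝ))).toReal ^ (-(2⁻¹:ℝ)) *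
          (ν (ball y ((Ψ.symm t : ℝ≥0) : ℝ))).toReal ^ (-(2⁻¹:ℝ))) := by rw [hKK]
    _ = cF * ((T:ℝ)/(s:ℝ)) ^ γ * (c₄ * (ν (ball x ((Ψ.symm t : ℝ≥0) : ℝ))).toReal ^ (-(2⁻¹:ℝ)) *
          (ν (ball y ((Ψ.symm t : ℝ≥0) : ℝ))).toReal ^ (-(2⁻¹:ℝ))) := by rw [hKdef]
end

section
/- Let (M,d) be a locally compact separable metric space with a σ-finite Borel measure μ, let I be a Borel subset of [0,∞), let V, W be Borel subsets of M, and let H = H_t(x,y) : I × V × W → [0,∞] be Borel measurable. Let (κ_{t,x})_{(t,x)∈I×V} be a family of Borel measures on M such that κ_{t,x}(M) ≤ 1 for all (t,x) ∈ I × V and such that (t,x) ↦ κ_{t,x}(A) is Borel measurable on I × V for every Borel set A ⊆ M. Then the following are equivalent: (1) for every (t,x) ∈ I × V and every Borel set A ⊆ W, κ_{t,x}(A) ≤ ∫_A H_t(x,y) dμ(y); (2) there exists a Borel measurable function p = p_t(x,y) : I × V × W → [0,∞] such that for every (t,x) ∈ I × V, κ_{t,x}(A) = ∫_A p_t(x,y)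 dμ(y) for every Borel set A ⊆ W, and p_t(x,y) ≤ H_t(x,y) for every y ∈ W. -/
open scoped NNReal ENNReal
open MeasureTheory Set

/-- Kernel form of the localized existence of the heat kernel: for a family of
sub-probability Borel measures `κ_{t,x}` on `M`, jointly measurable in `(t,x) ∈ I × V`,
the domination `κ_{t,x}(A) ≤ ∫_A H_t(x,·) dμ` for all Borel `A ⊆ W` is equivalent to the
existence of a Borel measurable density `p_t(x,y) ≤ H_t(x,y)` on `I × V × W` with
`κ_{t,x}(A) = ∫_A p_t(x,·) dμ` for all Borel `A ⊆ W`. -/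
theorem dynkin_hunt_stmt10 {M : Type*} [MetricSpace M] [LocallyCompactSpace M]
    [TopologicalSpace.SeparableSpace M] [MeasurableSpace M] [BorelSpace M]
    (μ : Measure M) [SigmaFinite μ]
    (I : Set ℝ) (hImeas : MeasurableSet I) (hI : I ⊆ Set.Ici 0)
    (V W : Set M) (hV : MeasurableSet V) (hW : MeasurableSet W)
    (H : ℝ → M → M → ℝ≥0∞)
    (hHmeas : Measurable fun p : (I ×ˢ (V ×ˢ W) : Set (ℝ × M × M)) =>
      H (p : ℝ × M × M).1 (p : ℝ × M × M).2.1 (p : ℝ × M × M).2.2)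
    (κ : ℝ → M → Measure M)
    (hκ1 : ∀ t ∈ I, ∀ x ∈ V, κ t x Set.univ ≤ 1)
    (hκmeas : ∀ A : Set M, MeasurableSet A →
      Measurable fun p : (I ×ˢ V : Set (ℝ × M)) => κ (p : ℝ × M).1 (p : ℝ × M).2 A) :
    (∀ t ∈ I, ∀ x ∈ V, ∀ A : Set M, A ⊆ W → MeasurableSet A →
        κ t x A ≤ ∫⁻ y in A, H t x y ∂μ) ↔
      ∃ p : ℝ → M → M → ℝ≥0∞,
        (Measurable fun q : (I ×ˢ (V ×ˢ W) : Set (ℝ × M × M)) =>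
          p (q : ℝ × M × M).1 (q : ℝ × M × M).2.1 (q : ℝ × M × M).2.2) ∧
        ∀ t ∈ I, ∀ x ∈ V,
          (∀ A : Set M, A ⊆ W → MeasurableSet A → κ t x A = ∫⁻ y in A, p t x y ∂μ) ∧
          (∀ y ∈ W, p t x y ≤ H t x y) := by
  classical
  haveI : SecondCountableTopology M := UniformSpace.secondCountable_of_separable M
  constructor
  · intro hdom
    -- the kernel of restricted measures
    set α := (I ×ˢ V : Set (ℝ × M))
    let κ' : ProbabilityTheory.Kernel α M :=
      { toFun := fun q => (κ (q : ℝ × M).1 (q : ℝ × M).2).restrict W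
        measurable' := by
          apply Measure.measurable_of_measurable_coe
          intro s hs
          simp_rw [Measure.restrict_apply hs]
          exact hκmeas (s ∩ W) (hs.inter hW) }
    have κ'_apply : ∀ (a : α) (s : Set M), MeasurableSet s →
        κ' a s = κ (a : ℝ × M).1 (a : ℝ × M).2 (s ∩ W) := by
      intro a s hs
      exact Measure.restrict_apply hs
    haveI : ProbabilityTheory.IsFiniteKernel κ' := by
      refine ⟨⟨1, ENNReal.one_lt_top, fun a => ?_⟩⟩
      calc κ' a Set.univ ≤ κ (a : ℝ × M).1 (a : ℝ × M).2 Set.univ :=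
            Measure.restrict_le_self _
        _ ≤ 1 := hκ1 _ a.2.1 _ a.2.2
    -- a finite measure equivalent to μ
    set ν := μ.toFinite with hν
    have hμν : μ ≪ ν := absolutelyContinuous_toFinite μ
    have hνμ : ν ≪ μ := MeasureTheory.toFinite_absolutelyContinuous μ
    let η : ProbabilityTheory.Kernel α M := ProbabilityTheory.Kernel.const α (ν.restrict W)
    haveI : ProbabilityTheory.IsFiniteKernel η := by
      infer_instance
    -- absolute continuity
    have hac : ∀ a : α, κ' a ≪ η a := by
      intro a
      refine Measure.AbsolutelyContinuous.mk fun s hs h0 => ?_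
      have hνsW : ν (s ∩ W) = 0 := by
        simpa [η, ProbabilityTheory.Kernel.const_apply, Measure.restrict_apply hs] using h0
      have hμsW : μ (s ∩ W) = 0 := hμν hνsW
      have := hdom _ a.2.1 _ a.2.2 (s ∩ W) Set.inter_subset_right (hs.inter hW)
      rw [κ'_apply a s hs]
      refine le_antisymm (this.trans ?_) zero_le
      rw [setLIntegral_measure_zero _ _ hμsW]
    -- Radon-Nikodym derivative of the kernels
    set g := κ'.rnDeriv η with hg
    have hgmeas : Measurable (fun p : α × M => g p.1 p.2) :=
      ProbabilityTheory.Kernel.measurable_rnDeriv κ' η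
    have hηg : ∀ a : α, (ν.restrict W).withDensity (g a) = κ' a := by
      intro a
      have := ProbabilityTheory.Kernel.withDensity_rnDeriv_eq (κ := κ') (η := η) (hac a)
      rwa [ProbabilityTheory.Kernel.withDensity_apply _ hgmeas,
        ProbabilityTheory.Kernel.const_apply] at this
    -- express ν.restrict W as a density over μ.restrict W
    set h : M → ℝ≥0∞ := ν.rnDeriv μ with hh
    have hhmeas : Measurable h := Measure.measurable_rnDeriv ν μ
    have hνW : ν.restrict W = (μ.restrict W).withDensity h := by
      conv_lhs => rw [← Measure.withDensity_rnDeriv_eq ν μ hνμ]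
      rw [restrict_withDensity hW]
    set D : α → M → ℝ≥0∞ := fun a y => h y * g a y with hD
    have hDmeas : Measurable (fun p : α × M => D p.1 p.2) :=
      (hhmeas.comp measurable_snd).mul hgmeas
    have hDa : ∀ a : α, Measurable (D a) := fun a =>
      hDmeas.comp (measurable_const.prodMk measurable_id)
    have key : ∀ (a : α) (A : Set M), A ⊆ W → MeasurableSet A →
        κ (a : ℝ × M).1 (a : ℝ × M).2 A = ∫⁻ y in A, D a y ∂μ := by
      intro a A hAW hA
      have h1 : κ' a = (μ.restrict W).withDensity (D a) := by
        rw [← hηg a, hνW, ← withDensity_mul _ hhmeas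
          (ProbabilityTheory.Kernel.measurable_rnDeriv_right κ' η a)]
        rfl
      have h2 : κ (a : ℝ × M).1 (a : ℝ × M).2 A = κ' a A := by
        rw [κ'_apply a A hA, Set.inter_eq_self_of_subset_left hAW]
      rw [h2, h1, withDensity_apply _ hA, Measure.restrict_restrict hA,
        Set.inter_eq_self_of_subset_left hAW]
    -- a.e. domination of D by H on W
    have hae : ∀ a : α, ∀ᵐ y ∂(μ.restrict W),
        D a y ≤ H (a : ℝ × M).1 (a : ℝ × M).2 y := by
      intro a
      refine ae_le_of_forall_setLIntegral_le_of_sigmaFinite (hDa a) fun s hs _ => ?_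
      rw [Measure.restrict_restrict hs]
      have h1 : ∫⁻ y in s ∩ W, D a y ∂μ = κ (a : ℝ × M).1 (a : ℝ × M).2 (s ∩ W) :=
        (key a (s ∩ W) Set.inter_subset_right (hs.inter hW)).symm
      rw [h1]
      exact hdom _ a.2.1 _ a.2.2 (s ∩ W) Set.inter_subset_right (hs.inter hW)
    -- the final density
    refine ⟨fun t x y =>
      if hq : (t, x) ∈ (I ×ˢ V : Set (ℝ × M)) ∧ y ∈ W then
        min (D ⟨(t, x), hq.1⟩ y) (H t x y) else 0, ?_, ?_⟩
    · have heq : (fun q : (I ×ˢ (V ×ˢ W) : Set (ℝ × M × M)) =>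
          if hq : ((q : ℝ × M × M).1, (q : ℝ × M × M).2.1) ∈ (I ×ˢ V : Set (ℝ × M)) ∧
              (q : ℝ × M × M).2.2 ∈ W then
            min (D ⟨((q : ℝ × M × M).1, (q : ℝ × M × M).2.1), hq.1⟩ (q : ℝ × M × M).2.2)
              (H (q : ℝ × M × M).1 (q : ℝ × M × M).2.1 (q : ℝ × M × M).2.2)
          else 0)
        = fun q : (I ×ˢ (V ×ˢ W) : Set (ℝ × M × M)) =>
          min (D ⟨((q : ℝ × M × M).1, (q : ℝ × M × M).2.1), ⟨q.2.1, q.2.2.1⟩⟩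
            (q : ℝ × M × M).2.2)
            (H (q : ℝ × M × M).1 (q : ℝ × M × M).2.1 (q : ℝ × M × M).2.2) := by
        funext q
        rw [dif_pos ⟨⟨q.2.1, q.2.2.1⟩, q.2.2.2⟩]
      simp only []
      rw [heq]
      refine Measurable.min ?_ hHmeas
      have hmap : Measurable (fun q : (I ×ˢ (V ×ˢ W) : Set (ℝ × M × M)) =>
          ((⟨((q : ℝ × M × M).1, (q : ℝ × M × M).2.1), ⟨q.2.1, q.2.2.1⟩⟩ : α),
            (q : ℝ × M × M).2.2)) := by
        refine Measurable.prodMk (Measurable.subtype_mk ?_) ?_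
        · exact (measurable_fst.comp measurable_subtype_coe).prodMk
            (measurable_fst.comp (measurable_snd.comp measurable_subtype_coe))
        · exact measurable_snd.comp (measurable_snd.comp measurable_subtype_coe)
      exact hDmeas.comp hmap
    · intro t ht x hx
      have hmem : (t, x) ∈ (I ×ˢ V : Set (ℝ × M)) := ⟨ht, hx⟩
      set a : α := ⟨(t, x), hmem⟩ with ha
      constructor
      · intro A hAW hA
        have h1 : ∫⁻ y in A,
            (if hq : (t, x) ∈ (I ×ˢ V : Set (ℝ × M)) ∧ y ∈ W then
              min (D ⟨(t, x), hq.1⟩ y) (H t x y) else 0) ∂μ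
            = ∫⁻ y in A, D a y ∂μ := by
          refine lintegral_congr_ae ?_
          have haeA : ∀ᵐ y ∂(μ.restrict A), D a y ≤ H t x y :=
            ae_restrict_of_ae_restrict_of_subset hAW (hae a)
          filter_upwards [ae_restrict_mem hA, haeA] with y hyA hyle
          rw [dif_pos ⟨hmem, hAW hyA⟩]
          exact min_eq_left hyle
        show κ t x A =
          ∫⁻ y in A,
            (if hq : (t, x) ∈ (I ×ˢ V : Set (ℝ × M)) ∧ y ∈ W then
              min (D ⟨(t, x), hq.1⟩ y) (H t x y) else 0) ∂μ
        rw [h1]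
        exact key a A hAW hA
      · intro y hy
        show (if hq : (t, x) ∈ (I ×ˢ V : Set (ℝ × M)) ∧ y ∈ W then
            min (D ⟨(t, x), hq.1⟩ y) (H t x y) else 0) ≤ H t x y
        rw [dif_pos ⟨hmem, hy⟩]
        exact min_le_right _ _
  · rintro ⟨p, hpmeas, hp⟩ t ht x hx A hAW hA
    rw [((hp t ht x hx).1 A hAW hA)]
    refine lintegral_mono_ae ?_
    filter_upwards [ae_restrict_mem hA] with y hy
    exact (hp t ht x hx).2 y (hAW hy)
end

section
/- Let (Ω, 𝓕, P) be a probability space, let τ : Ω → [0,∞] be a random variable, and let T, ε ∈ (0,∞). If E[τ ∧ T] ≥ ε T, then for every δ ∈ (0,∞), E[exp(−τ/(δT))] ≤ 1 − (ε/δ) e^{−1/δ}. -/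
open scoped NNReal ENNReal
open MeasureTheory

lemma dh_key (a u : ℝ) (_ha : 0 < a) (hu : 0 ≤ u) :
    Real.exp (-u) ≤ 1 - Real.exp (-a) * min u a := by
  have h1 : Real.exp (-u) * Real.exp u = 1 := by
    rw [← Real.exp_add]; simp
  have h2 : Real.exp (-a) * Real.exp a = 1 := by
    rw [← Real.exp_add]; simp
  have h3 : u + 1 ≤ Real.exp u := Real.add_one_le_exp u
  have h4 : a + 1 ≤ Real.exp a := Real.add_one_le_exp a
  have h5 : (0:ℝ) < Real.exp (-u) := Real.exp_pos _
  have h6 : (0:ℝ) < Real.exp (-a) := Real.exp_pos _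
  rcases le_total u a with hc | hc
  · rw [min_eq_left hc]
    have hFE : Real.exp (-a) ≤ Real.exp (-u) := Real.exp_le_exp.2 (by linarith)
    nlinarith [mul_le_mul_of_nonneg_right hFE hu,
      mul_le_mul_of_nonneg_left h3 h5.le]
  · rw [min_eq_right hc]
    have hEF : Real.exp (-u) ≤ Real.exp (-a) := Real.exp_le_exp.2 (by linarith)
    nlinarith [mul_le_mul_of_nonneg_left h4 h6.le]

/-- If `E[τ ∧ T] ≥ εT` with `T, ε ∈ (0,∞)`, then for every `δ ∈ (0,∞)`,
`E[exp(-τ/(δT))] ≤ 1 - (ε/δ) e^{-1/δ}` (with `exp(-τ/(δT)) := 0` on `{τ = ∞}`). -/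
theorem dynkin_hunt_stmt13 {Ω : Type*} [MeasurableSpace Ω]
    (P : Measure Ω) [IsProbabilityMeasure P]
    (τ : Ω → ℝ≥0∞) (hτ : Measurable τ)
    (T ε : ℝ) (hT : 0 < T) (hε : 0 < ε)
    (h : ENNReal.ofReal (ε * T) ≤ ∫⁻ ω, min (τ ω) (ENNReal.ofReal T) ∂P) :
    ∀ δ : ℝ, 0 < δ →
      (∫ ω, (if τ ω = ⊤ then 0 else Real.exp (-(τ ω).toReal / (δ * T))) ∂P)
        ≤ 1 - ε / δ * Real.exp (-(1 / δ)) := by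
  intro δ hδ
  set a : ℝ := 1 / δ with ha_def
  have ha : 0 < a := by positivity
  have hδT : 0 < δ * T := by positivity
  set C : ℝ := Real.exp (-a) / (δ * T) with hC_def
  have hC : 0 < C := by positivity
  set g : Ω → ℝ := fun ω => if τ ω = ⊤ then 0 else Real.exp (-(τ ω).toReal / (δ * T)) with hg_def
  set m : Ω → ℝ := fun ω => (min (τ ω) (ENNReal.ofReal T)).toReal with hm_def
  -- pointwise bound
  have hpt : ∀ ω, g ω ≤ 1 - C * m ω := by
    intro ω
    by_cases hω : τ ω = ⊤
    · have hm : m ω = T := by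
        simp [hm_def, hω, ENNReal.toReal_ofReal hT.le]
      have h4 : a + 1 ≤ Real.exp a := Real.add_one_le_exp a
      have h2 : Real.exp (-a) * Real.exp a = 1 := by rw [← Real.exp_add]; simp
      have h6 : (0:ℝ) < Real.exp (-a) := Real.exp_pos _
      have hCT : C * T = Real.exp (-a) * a := by
        rw [hC_def, ha_def]
        field_simp
      simp only [hg_def, hω, if_true, hm, hCT]
      nlinarith [mul_le_mul_of_nonneg_left h4 h6.le]
    · have hx : (0:ℝ) ≤ (τ ω).toReal := ENNReal.toReal_nonneg
      have hm : m ω = min (τ ω).toReal T := by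
        rw [hm_def]
        simp only
        rw [ENNReal.toReal_min hω ENNReal.ofReal_ne_top, ENNReal.toReal_ofReal hT.le]
      have key := dh_key a ((τ ω).toReal / (δ * T)) ha (by positivity)
      have hrw : Real.exp (-a) * min ((τ ω).toReal / (δ * T)) a = C * m ω := by
        rw [hm, hC_def, ha_def]
        rcases le_total (τ ω).toReal T with hle | hle
        · rw [min_eq_left hle, min_eq_left (by rw [div_le_div_iff₀ hδT hδ]; nlinarith)]
          ring
        · rw [min_eq_right hle, min_eq_right (by rw [div_le_div_iff₀ hδ hδT]; nlinarith)]
          field_simp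
      rw [hrw] at key
      simpa [hg_def, hω, neg_div] using key
  -- integrability
  have hgm : Measurable g := by
    apply Measurable.ite (hτ (measurableSet_singleton ⊤)) measurable_const
    exact (Real.measurable_exp.comp ((hτ.ennreal_toReal.neg).div_const _))
  have hmm : Measurable m := (hτ.min measurable_const).ennreal_toReal
  have hg_int : Integrable g P := by
    apply Integrable.mono' (integrable_const (1:ℝ)) hgm.aestronglyMeasurable
    filter_upwards with ω
    rw [hg_def]
    simp only
    split_ifs with hω
    · simp
    · rw [Real.norm_eq_abs, abs_of_nonneg (Real.exp_pos _).le]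
      have : Real.exp (-(τ ω).toReal / (δ * T)) ≤ Real.exp 0 :=
        Real.exp_le_exp.2 (by rw [neg_div]; exact neg_nonpos.2 (by positivity))
      simpa using this
  have hm_int : Integrable m P := by
    apply Integrable.mono' (integrable_const T) hmm.aestronglyMeasurable
    filter_upwards with ω
    rw [Real.norm_eq_abs, abs_of_nonneg ENNReal.toReal_nonneg]
    calc (min (τ ω) (ENNReal.ofReal T)).toReal ≤ (ENNReal.ofReal T).toReal :=
          ENNReal.toReal_mono ENNReal.ofReal_ne_top (min_le_right _ _)
      _ = T := ENNReal.toReal_ofReal hT.le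
  -- integral comparison
  have hstep : ∫ ω, g ω ∂P ≤ ∫ ω, (1 - C * m ω) ∂P :=
    integral_mono hg_int ((integrable_const (1:ℝ)).sub (hm_int.const_mul C)) hpt
  have hL : ∫⁻ ω, min (τ ω) (ENNReal.ofReal T) ∂P ≠ ⊤ := by
    apply ne_top_of_le_ne_top (b := ENNReal.ofReal T)
    · exact ENNReal.ofReal_ne_top
    · calc ∫⁻ ω, min (τ ω) (ENNReal.ofReal T) ∂P
          ≤ ∫⁻ _, ENNReal.ofReal T ∂P := lintegral_mono fun ω => min_le_right _ _
        _ = ENNReal.ofReal T := by simp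
  have hmval : ∫ ω, m ω ∂P = (∫⁻ ω, min (τ ω) (ENNReal.ofReal T) ∂P).toReal := by
    rw [hm_def]
    exact integral_toReal ((hτ.min measurable_const).aemeasurable)
      (Filter.Eventually.of_forall fun ω =>
        lt_of_le_of_lt (min_le_right _ _) ENNReal.ofReal_lt_top)
  have hεT : ε * T ≤ ∫ ω, m ω ∂P := by
    rw [hmval]
    have := ENNReal.toReal_mono hL h
    rwa [ENNReal.toReal_ofReal (by positivity)] at this
  have hfinal : ∫ ω, (1 - C * m ω) ∂P ≤ 1 - ε / δ * Real.exp (-(1 / δ)) := by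
    rw [integral_sub (integrable_const 1) (hm_int.const_mul C), integral_const,
      integral_const_mul]
    simp only [measure_univ, ENNReal.toReal_one, smul_eq_mul, one_mul, probReal_univ, mul_one]
    have : ε / δ * Real.exp (-(1 / δ)) ≤ C * ∫ ω, m ω ∂P := by
      calc ε / δ * Real.exp (-(1 / δ)) = C * (ε * T) := by
            rw [hC_def, ha_def]; field_simp
        _ ≤ C * ∫ ω, m ω ∂P := mul_le_mul_of_nonneg_left hεT hC.le
    linarith
  calc ∫ ω, (if τ ω = ⊤ then 0 else Real.exp (-(τ ω).toReal / (δ * T))) ∂P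
      = ∫ ω, g ω ∂P := rfl
    _ ≤ ∫ ω, (1 - C * m ω) ∂P := hstep
    _ ≤ _ := hfinal
end

section
/- For every γ ∈ (0,∞) there exist constants c', γ' ∈ (0,∞), depending only on c_Ψ, β₁, β₂ and γ, such that for all r, t ∈ (0,∞), exp(−Φ(γ r, t)) ≤ c' exp(−γ' (Ψ(r)/t)^{1/(β₂−1)}). -/
open scoped NNReal ENNReal

lemma aux_young (a b β x : ℝ) (ha : 0 < a) (hb : 0 < b) (hβ : 1 < β) (hx : 0 < x) :
    a * x - b * x ^ β ≤ a * (a / b) ^ (β - 1)⁻¹ := by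
  set x₀ := (a / b) ^ (β - 1)⁻¹ with hx₀def
  have hab : 0 < a / b := div_pos ha hb
  have hx₀ : 0 < x₀ := Real.rpow_pos_of_pos hab _
  have hβ1 : β - 1 ≠ 0 := by linarith
  have hx₀pow : x₀ ^ (β - 1) = a / b := Real.rpow_inv_rpow hab.le hβ1
  rcases le_or_gt x x₀ with h | h
  · have h1 : a * x ≤ a * x₀ := by nlinarith
    have hbx : 0 ≤ b * x ^ β := by positivity
    linarith
  · have h1 : x ^ β = x ^ (β - 1) * x := by
      rw [← Real.rpow_add_one hx.ne' (β - 1), sub_add_cancel]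
    have h2 : a / b ≤ x ^ (β - 1) :=
      hx₀pow ▸ Real.rpow_le_rpow hx₀.le h.le (by linarith)
    have h3 : a * x ≤ b * x ^ β := by
      have hax : a * x = b * (a / b) * x := by field_simp
      rw [h1, hax, ← mul_assoc]
      gcongr
    nlinarith

set_option maxHeartbeats 1600000 in
/-- For every `γ ∈ (0,∞)` there exist `c', γ' ∈ (0,∞)`, depending only on
`c_Ψ, β₁, β₂, γ`, such that `exp(-Φ(γr,t)) ≤ c' exp(-γ'(Ψ(r)/t)^{1/(β₂-1)})` for all
`r, t ∈ (0,∞)`, where `Φ(R,t) = sup_{ρ>0} (R/ρ - t/Ψ(ρ))`. -/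
theorem dynkin_hunt_stmt15 (cΨ β₁ β₂ γ : ℝ)
    (hcΨ : 0 < cΨ) (hβ₁ : 1 < β₁) (hβ₁₂ : β₁ ≤ β₂) (hγ : 0 < γ) :
    ∃ c' γ' : ℝ, 0 < c' ∧ 0 < γ' ∧
      ∀ Ψ : ℝ≥0 ≃ₜ ℝ≥0,
        (∀ r R : ℝ≥0, 0 < r → r ≤ R →
          cΨ⁻¹ * ((R : ℝ) / (r : ℝ)) ^ β₁ ≤ ((Ψ R : ℝ≥0) : ℝ) / ((Ψ r : ℝ≥0) : ℝ) ∧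
          ((Ψ R : ℝ≥0) : ℝ) / ((Ψ r : ℝ≥0) : ℝ) ≤ cΨ * ((R : ℝ) / (r : ℝ)) ^ β₂) →
        ∀ (r : ℝ≥0) (t : ℝ), 0 < r → 0 < t →
          Real.exp (-(⨆ ρ : {ρ : ℝ≥0 // 0 < ρ},
              (γ * (r : ℝ) / (ρ.1 : ℝ) - t / ((Ψ ρ.1 : ℝ≥0) : ℝ))))
            ≤ c' * Real.exp (-(γ' * (((Ψ r : ℝ≥0) : ℝ) / t) ^ (β₂ - 1)⁻¹)) := by
  have hβ₂ : 1 < β₂ := lt_of_lt_of_le hβ₁ hβ₁₂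
  obtain ⟨e, he⟩ : ∃ e : ℝ, e = (β₂ - 1)⁻¹ := ⟨_, rfl⟩
  have he0 : 0 < e := he ▸ inv_pos.2 (by linarith)
  have hβ₂0 : 0 < β₂ := by linarith
  have hXc : 0 < γ / (cΨ * β₂) := div_pos hγ (by positivity)
  obtain ⟨γ', hγ'def⟩ : ∃ g : ℝ, g = γ * (1 - β₂⁻¹) * (γ / (cΨ * β₂)) ^ e := ⟨_, rfl⟩
  have h1β : 0 < 1 - β₂⁻¹ := by
    have : β₂⁻¹ < 1 := by rw [inv_lt_one_iff₀]; right; exact hβ₂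
    linarith
  have hγ'pos : 0 < γ' := by
    rw [hγ'def]
    have := Real.rpow_pos_of_pos hXc e
    positivity
  obtain ⟨T, hT⟩ : ∃ T : ℝ, T = cΨ * β₂ / γ := ⟨_, rfl⟩
  have hTpos : 0 < T := by rw [hT]; positivity
  obtain ⟨C, hC⟩ : ∃ C : ℝ, C = 1 + γ' * T ^ e := ⟨_, rfl⟩
  have hC1 : 1 ≤ C := by
    rw [hC]
    have := Real.rpow_pos_of_pos hTpos e
    nlinarith
  refine ⟨Real.exp C, γ', Real.exp_pos _, hγ'pos, ?_⟩
  intro Ψ hΨ r t hr ht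
  have hr0 : (0:ℝ) < (r:ℝ) := hr
  -- positivity of Ψ
  have hΨpos : ∀ ρ : ℝ≥0, 0 < ρ → 0 < ((Ψ ρ : ℝ≥0) : ℝ) := by
    intro ρ hρ
    have hρ0 : (0:ℝ) < (ρ:ℝ) := hρ
    rcases (lt_or_eq_of_le (Ψ ρ).coe_nonneg) with h | h
    · exact h
    · exfalso
      have h2 := (hΨ ρ ρ hρ le_rfl).1
      rw [← h, zero_div, div_self hρ0.ne', Real.one_rpow, mul_one] at h2
      exact absurd h2 (not_le.2 (inv_pos.2 hcΨ))
  have hΨr : 0 < ((Ψ r : ℝ≥0) : ℝ) := hΨpos r hr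
  obtain ⟨A, hA⟩ : ∃ A : ℝ, A = ((Ψ r : ℝ≥0) : ℝ) / t := ⟨_, rfl⟩
  have hApos : 0 < A := hA ▸ div_pos hΨr ht
  obtain ⟨f, hf⟩ : ∃ f : {ρ : ℝ≥0 // 0 < ρ} → ℝ,
      f = fun ρ => γ * (r : ℝ) / (ρ.1 : ℝ) - t / ((Ψ ρ.1 : ℝ≥0) : ℝ) := ⟨_, rfl⟩
  -- bounded above
  have hbdd : BddAbove (Set.range f) := by
    refine ⟨max γ (γ * (γ / (t / (cΨ * ((Ψ r : ℝ≥0) : ℝ)))) ^ (β₁ - 1)⁻¹), ?_⟩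
    rintro _ ⟨⟨ρ, hρ⟩, rfl⟩
    have hρ0 : (0:ℝ) < (ρ:ℝ) := hρ
    have hΨρ : 0 < ((Ψ ρ : ℝ≥0) : ℝ) := hΨpos ρ hρ
    rcases le_total r ρ with hle | hle
    · have h1 : γ * (r:ℝ) / (ρ:ℝ) ≤ γ := by
        rw [div_le_iff₀ hρ0]
        have : (r:ℝ) ≤ (ρ:ℝ) := hle
        nlinarith
      have h2 : 0 < t / ((Ψ ρ : ℝ≥0) : ℝ) := div_pos ht hΨρ
      refine le_trans ?_ (le_max_left _ _)
      simp only [hf]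
      linarith
    · -- ρ ≤ r
      have hρr : (ρ:ℝ) ≤ (r:ℝ) := hle
      have hxpos : 0 < (r:ℝ) / (ρ:ℝ) := div_pos hr0 hρ0
      have hbpos : 0 < t / (cΨ * ((Ψ r : ℝ≥0) : ℝ)) := div_pos ht (by positivity)
      have h1 := (hΨ ρ r hρ hle).1
      have h1' : ((r:ℝ) / (ρ:ℝ)) ^ β₁
          ≤ cΨ * (((Ψ r : ℝ≥0) : ℝ) / ((Ψ ρ : ℝ≥0) : ℝ)) :=
        (inv_mul_le_iff₀ hcΨ).1 h1
      have h2 : t / (cΨ * ((Ψ r : ℝ≥0) : ℝ)) * ((r:ℝ) / (ρ:ℝ)) ^ β₁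
          ≤ t / ((Ψ ρ : ℝ≥0) : ℝ) := by
        have h3 := mul_le_mul_of_nonneg_left h1' hbpos.le
        have h4 : t / (cΨ * ((Ψ r : ℝ≥0) : ℝ))
            * (cΨ * (((Ψ r : ℝ≥0) : ℝ) / ((Ψ ρ : ℝ≥0) : ℝ)))
            = t / ((Ψ ρ : ℝ≥0) : ℝ) := by
          field_simp
        rw [h4] at h3
        exact h3
      have h3 : f ⟨ρ, hρ⟩ ≤ γ * ((r:ℝ) / (ρ:ℝ))
          - t / (cΨ * ((Ψ r : ℝ≥0) : ℝ)) * ((r:ℝ) / (ρ:ℝ)) ^ β₁ := by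
        simp only [hf]
        rw [mul_div_assoc]
        linarith
      refine le_trans h3 (le_trans (aux_young γ _ β₁ _ hγ hbpos hβ₁ hxpos)
        (le_max_right _ _))
  -- main claim: ∃ ρ₀, γ' * A ^ e - C ≤ f ρ₀
  have hkey : ∃ ρ₀ : {ρ : ℝ≥0 // 0 < ρ}, γ' * A ^ e - C ≤ f ρ₀ := by
    rcases le_or_gt T A with hcase | hcase
    · -- A ≥ T : choose ρ₀ = r / lam
      obtain ⟨X, hX⟩ : ∃ X : ℝ, X = γ / (cΨ * β₂) * A := ⟨_, rfl⟩
      have hXpos : 0 < X := hX ▸ mul_pos hXc hApos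
      have hX1 : 1 ≤ X := by
        rw [hX]
        rw [hT, div_le_iff₀ hγ] at hcase
        rw [div_mul_eq_mul_div, le_div_iff₀ (by positivity)]
        nlinarith
      obtain ⟨lam, hlam⟩ : ∃ lam : ℝ, lam = X ^ e := ⟨_, rfl⟩
      have hlam1 : 1 ≤ lam := hlam ▸ Real.one_le_rpow hX1 he0.le
      have hlampos : 0 < lam := lt_of_lt_of_le one_pos hlam1
      have hρval : 0 < (r:ℝ) / lam := div_pos hr0 hlampos
      obtain ⟨ρ₀, hρ₀coe⟩ : ∃ ρ₀ : ℝ≥0, (ρ₀:ℝ) = (r:ℝ) / lam :=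
        ⟨Real.toNNReal ((r:ℝ) / lam), Real.coe_toNNReal _ hρval.le⟩
      have hρ₀pos' : (0:ℝ) < (ρ₀:ℝ) := by rw [hρ₀coe]; exact hρval
      have hρ₀pos : 0 < ρ₀ := by exact_mod_cast hρ₀pos'
      refine ⟨⟨ρ₀, hρ₀pos⟩, ?_⟩
      have hρ₀r : ρ₀ ≤ r := by
        have h0 : (ρ₀:ℝ) ≤ (r:ℝ) := by
          rw [hρ₀coe, div_le_iff₀ hlampos]; nlinarith
        exact_mod_cast h0
      have hΨρ₀ : 0 < ((Ψ ρ₀ : ℝ≥0) : ℝ) := hΨpos ρ₀ hρ₀pos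
      have hrat : (r:ℝ) / (ρ₀:ℝ) = lam := by
        rw [hρ₀coe, div_div_eq_mul_div, mul_comm, mul_div_assoc,
          div_self hr0.ne', mul_one]
      have h1 := (hΨ ρ₀ r hρ₀pos hρ₀r).2
      rw [hrat] at h1
      have h2 : t / ((Ψ ρ₀ : ℝ≥0) : ℝ)
          ≤ t / ((Ψ r : ℝ≥0) : ℝ) * (cΨ * lam ^ β₂) := by
        have hid : t / ((Ψ ρ₀ : ℝ≥0) : ℝ)
            = t / ((Ψ r : ℝ≥0) : ℝ) * (((Ψ r : ℝ≥0) : ℝ) / ((Ψ ρ₀ : ℝ≥0) : ℝ)) := by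
          field_simp
        rw [hid]
        exact mul_le_mul_of_nonneg_left h1 (le_of_lt (div_pos ht hΨr))
      have h4 : lam ^ (β₂ - 1) = X := by
        rw [hlam, ← Real.rpow_mul hXpos.le, he,
          inv_mul_cancel₀ (by linarith : β₂ - 1 ≠ 0), Real.rpow_one]
      have hlampow : lam ^ β₂ = lam * X := by
        have hsplit : lam ^ β₂ = lam ^ (β₂ - 1) * lam := by
          rw [← Real.rpow_add_one hlampos.ne' (β₂ - 1), sub_add_cancel]
        rw [hsplit, h4, mul_comm]
      have h5 : t / ((Ψ r : ℝ≥0) : ℝ) * (cΨ * lam ^ β₂) = γ * lam / β₂ := by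
        rw [hlampow, hX, hA]
        field_simp
      have h6 : γ * (r:ℝ) / (ρ₀:ℝ) = γ * lam := by
        rw [mul_div_assoc, hrat]
      have h7 : γ' * A ^ e = γ * (1 - β₂⁻¹) * lam := by
        rw [hγ'def, hlam, hX, Real.mul_rpow hXc.le hApos.le]
        ring
      have hfval : γ * lam - γ * lam / β₂ ≤ f ⟨ρ₀, hρ₀pos⟩ := by
        simp only [hf]
        rw [h6]
        have h25 := le_trans h2 (le_of_eq h5)
        linarith
      have h8 : γ * (1 - β₂⁻¹) * lam = γ * lam - γ * lam / β₂ := by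
        field_simp
      have hC0 : 0 ≤ C := by linarith
      calc γ' * A ^ e - C ≤ γ' * A ^ e := by linarith
        _ = γ * lam - γ * lam / β₂ := by rw [h7, h8]
        _ ≤ _ := hfval
    · -- A < T : choose ρ₀ = r * s
      obtain ⟨s, hs⟩ : ∃ s : ℝ, s = max 1 ((cΨ / A) ^ β₁⁻¹) := ⟨_, rfl⟩
      have hs1 : 1 ≤ s := hs ▸ le_max_left _ _
      have hspos : 0 < s := lt_of_lt_of_le one_pos hs1
      have hρval : 0 < (r:ℝ) * s := by positivity
      obtain ⟨ρ₀, hρ₀coe⟩ : ∃ ρ₀ : ℝ≥0, (ρ₀:ℝ) = (r:ℝ) * s :=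
        ⟨Real.toNNReal ((r:ℝ) * s), Real.coe_toNNReal _ hρval.le⟩
      have hρ₀pos' : (0:ℝ) < (ρ₀:ℝ) := by rw [hρ₀coe]; exact hρval
      have hρ₀pos : 0 < ρ₀ := by exact_mod_cast hρ₀pos'
      refine ⟨⟨ρ₀, hρ₀pos⟩, ?_⟩
      have hrρ₀ : r ≤ ρ₀ := by
        have h0 : (r:ℝ) ≤ (ρ₀:ℝ) := by
          rw [hρ₀coe]
          nlinarith [mul_le_mul_of_nonneg_left hs1 hr0.le]
        exact_mod_cast h0
      have hΨρ₀ : 0 < ((Ψ ρ₀ : ℝ≥0) : ℝ) := hΨpos ρ₀ hρ₀pos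
      have hrat : (ρ₀:ℝ) / (r:ℝ) = s := by
        rw [hρ₀coe, mul_comm, mul_div_assoc, div_self hr0.ne', mul_one]
      have h1 := (hΨ r ρ₀ hr hrρ₀).1
      rw [hrat] at h1
      have hcA : 0 < cΨ / A := div_pos hcΨ hApos
      have hsβ : cΨ / A ≤ s ^ β₁ := by
        have h2 : (cΨ / A) ^ β₁⁻¹ ≤ s := hs ▸ le_max_right _ _
        have h3 := Real.rpow_le_rpow (Real.rpow_nonneg hcA.le _) h2
          (le_of_lt (by linarith : (0:ℝ) < β₁))
        rwa [Real.rpow_inv_rpow hcA.le (by linarith : β₁ ≠ 0)] at h3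
      have h4 : t / ((Ψ r : ℝ≥0) : ℝ) ≤ ((Ψ ρ₀ : ℝ≥0) : ℝ) / ((Ψ r : ℝ≥0) : ℝ) := by
        have hid : t / ((Ψ r : ℝ≥0) : ℝ) = cΨ⁻¹ * (cΨ / A) := by
          rw [hA]
          field_simp
        rw [hid]
        exact le_trans (mul_le_mul_of_nonneg_left hsβ (inv_pos.2 hcΨ).le) h1
      have h5 : t ≤ ((Ψ ρ₀ : ℝ≥0) : ℝ) := (div_le_div_iff_of_pos_right hΨr).1 h4
      have h6 : t / ((Ψ ρ₀ : ℝ≥0) : ℝ) ≤ 1 := (div_le_one hΨρ₀).2 h5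
      have h7 : (-1 : ℝ) ≤ f ⟨ρ₀, hρ₀pos⟩ := by
        simp only [hf]
        have hpos : 0 ≤ γ * (r:ℝ) / ((ρ₀:ℝ≥0):ℝ) := by positivity
        linarith
      have h8 : A ^ e ≤ T ^ e := Real.rpow_le_rpow hApos.le hcase.le he0.le
      have h9 : γ' * A ^ e - C ≤ -1 := by
        rw [hC]
        nlinarith
      linarith
  obtain ⟨ρ₀, hρ₀⟩ := hkey
  have hsup : γ' * A ^ e - C ≤ ⨆ ρ, f ρ := le_trans hρ₀ (le_ciSup hbdd ρ₀)
  rw [← Real.exp_add]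
  apply Real.exp_le_exp.2
  rw [hf] at hsup
  rw [← hA, ← he]
  linarith
end
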